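/- arXiv:0803.1869 — 8 statements merged into one kernel-verified Lean document; each statement's English description precedes it below -/
import Mathlib

section
/- Let γ be a positive integer, z a real number, and A a real square matrix of order 2γ−1 with the following block structure: the first γ rows consist of a left (γ×(γ−1)) block whose first γ−1 rows form z·I_{γ−1} and whose last row is zero, together with a right (γ×γ) block equal to −I_γ; the last γ−1 rows consist of a left ((γ−1)×(γ−1)) block U which is upper triangular with main-diagonal entries a_1, …, a_{γ−1}, together with a right ((γ−1)×γ) block whose first γ−1 columns form an upper triangular matrix V with main-diagonal entries b_1, …, b_{γ−1} and whose last column is arbitrary. Then det(A) = (−1)^γ · (a_1 + z·b_1)(a_2 + z·b_2) ⋯ (a_{γ−1} + z·b_{γ−1}). -/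
theorem rot_pow_val' (n k : ℕ) (i : Fin (n+1)) :
    ((((finRotate (n+1))^k) i : Fin (n+1)) : ℕ) = ((i:ℕ) + k) % (n+1) := by
  induction k with
  | zero => simp [Nat.mod_eq_of_lt i.isLt]
  | succ k ih =>
    rw [pow_succ', Equiv.Perm.mul_apply, finRotate_succ_apply, Fin.val_add, Fin.val_one', ih,
      ← Nat.add_mod, Nat.add_assoc]

theorem rot_pow_val (n k : ℕ) (hn : 0 < n) (i : Fin n) :
    ((((finRotate n)^k) i : Fin n) : ℕ) = ((i:ℕ) + k) % n := by
  cases n with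
  | zero => omega
  | succ m => exact rot_pow_val' m k i

theorem sign_finRotate' (n : ℕ) (hn : 0 < n) :
    Equiv.Perm.sign (finRotate n) = (-1)^(n-1) := by
  cases n with
  | zero => omega
  | succ m => simpa using sign_finRotate m


/-- **Lemma 2.**  Let `γ` be a positive integer, `z` a real number and `A` a real square
matrix of order `2γ − 1` with the following block structure: the first `γ` rows consist of a
left `γ × (γ−1)` block whose first `γ−1` rows form `z·I_{γ−1}` and whose last row is zero,
together with a right `γ × γ` block equal to `−I_γ`; the last `γ−1` rows consist of a left
`(γ−1) × (γ−1)` upper triangular block with main-diagonal entries `a 0, …, a (γ−2)`,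
together with a right `(γ−1) × γ` block whose first `γ−1` columns form an upper triangular
matrix with main-diagonal entries `b 0, …, b (γ−2)` and whose last column is arbitrary.
Then `det A = (−1)^γ · ∏ r, (a r + z · b r)`. -/
theorem det_block_upper_triangular (γ : ℕ) (hγ : 0 < γ) (z : ℝ) (a b : ℕ → ℝ)
    (A : Matrix (Fin (2 * γ - 1)) (Fin (2 * γ - 1)) ℝ)
    -- top-left `γ × (γ−1)` block: first `γ−1` rows form `z·I_{γ−1}`, last row is zero
    (htl : ∀ i j : Fin (2 * γ - 1), (i : ℕ) < γ → (j : ℕ) < γ - 1 →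
      A i j = if (i : ℕ) = (j : ℕ) then z else 0)
    -- top-right `γ × γ` block: `−I_γ`
    (htr : ∀ i j : Fin (2 * γ - 1), (i : ℕ) < γ → γ - 1 ≤ (j : ℕ) →
      A i j = if (j : ℕ) = (i : ℕ) + (γ - 1) then -1 else 0)
    -- bottom-left `(γ−1) × (γ−1)` block: upper triangular with diagonal `a`
    (hbl : ∀ i j : Fin (2 * γ - 1), γ ≤ (i : ℕ) → (j : ℕ) < γ - 1 →
      (j : ℕ) ≤ (i : ℕ) - γ →
      A i j = if (j : ℕ) = (i : ℕ) - γ then a ((i : ℕ) - γ) else 0)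
    -- bottom-right `(γ−1) × γ` block: first `γ−1` columns upper triangular with diagonal
    -- `b` (the last column, with `(j : ℕ) = 2γ − 2`, is arbitrary)
    (hbr : ∀ i j : Fin (2 * γ - 1), γ ≤ (i : ℕ) → γ - 1 ≤ (j : ℕ) →
      (j : ℕ) < 2 * γ - 2 → (j : ℕ) - (γ - 1) ≤ (i : ℕ) - γ →
      A i j = if (j : ℕ) - (γ - 1) = (i : ℕ) - γ then b ((i : ℕ) - γ) else 0) :
    A.det = (-1 : ℝ) ^ γ * ∏ r ∈ Finset.range (γ - 1), (a r + z * b r) := by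
  have hN : 0 < 2 * γ - 1 := by omega
  -- the elementary matrix performing the column operations C_j ← C_j + z·C_{j+(γ-1)}
  set E : Matrix (Fin (2*γ-1)) (Fin (2*γ-1)) ℝ :=
    fun k j => if k = j then 1 else
      if (k:ℕ) = (j:ℕ) + (γ-1) ∧ (j:ℕ) < γ - 1 then z else 0 with hE
  have hEtri : E.BlockTriangular OrderDual.toDual := by
    intro k j h
    have hkj : (k:ℕ) < (j:ℕ) := h
    have h1 : ¬ (k = j) := by intro h'; rw [h'] at hkj; omega
    have h2 : ¬ ((k:ℕ) = (j:ℕ) + (γ-1) ∧ (j:ℕ) < γ - 1) := by omega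
    simp only [hE, if_neg h1, if_neg h2]
  have hEdet : E.det = 1 := by
    rw [Matrix.det_of_lowerTriangular E hEtri]
    have : ∀ k : Fin (2*γ-1), E k k = 1 := by intro k; simp [hE]
    simp [this]
  set B := A * E with hBdef
  have hdetB : B.det = A.det := by rw [hBdef, Matrix.det_mul, hEdet, mul_one]
  -- entries of B
  have hB : ∀ (i j : Fin (2*γ-1)), B i j =
      A i j + (if h : (j:ℕ) < γ - 1 then z * A i ⟨(j:ℕ) + (γ-1), by omega⟩ else 0) := by
    intro i j
    rw [hBdef, Matrix.mul_apply]
    by_cases hj : (j:ℕ) < γ - 1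
    · rw [dif_pos hj]
      set j' : Fin (2*γ-1) := ⟨(j:ℕ) + (γ-1), by omega⟩ with hj'
      have hne : j' ≠ j := by
        intro h; apply_fun Fin.val at h
        simp only [hj'] at h; omega
      have hpt : ∀ k, A i k * E k j =
          (if k = j then A i j else 0) + (if k = j' then z * A i j' else 0) := by
        intro k
        by_cases h1 : k = j
        · subst h1
          have hEkk : E k k = 1 := by simp [hE]
          rw [hEkk, mul_one, if_pos rfl, if_neg (fun h => hne h.symm), add_zero]
        · by_cases h2 : k = j'
          · subst h2
            have hEkj : E j' j = z := by
              simp only [hE]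
              rw [if_neg hne, if_pos ⟨by simp [hj'], hj⟩]
            rw [hEkj, if_neg h1, if_pos rfl, zero_add, mul_comm]
          · have hv2 : ¬ ((k:ℕ) = (j:ℕ) + (γ-1) ∧ (j:ℕ) < γ - 1) := by
              intro ⟨hh, _⟩
              exact h2 (Fin.ext (by simp [hj', hh]))
            simp only [hE, if_neg h1, if_neg hv2, if_neg h2, mul_zero, add_zero]
      rw [Finset.sum_congr rfl fun k _ => hpt k, Finset.sum_add_distrib,
        Finset.sum_ite_eq' Finset.univ j (fun _ => A i j),
        Finset.sum_ite_eq' Finset.univ j' (fun _ => z * A i j')]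
      simp
    · rw [dif_neg hj, add_zero]
      have hpt : ∀ k, A i k * E k j = if k = j then A i j else 0 := by
        intro k
        by_cases h1 : k = j
        · subst h1; simp [hE]
        · have hv2 : ¬ ((k:ℕ) = (j:ℕ) + (γ-1) ∧ (j:ℕ) < γ - 1) := by omega
          simp only [hE, if_neg h1, if_neg hv2, mul_zero]
      rw [Finset.sum_congr rfl fun k _ => hpt k,
        Finset.sum_ite_eq' Finset.univ j (fun _ => A i j)]
      simp
  -- descriptions of B by rows
  have hBtop : ∀ i j : Fin (2*γ-1), (i:ℕ) < γ →
      B i j = if (j:ℕ) = (i:ℕ) + (γ-1) then -1 else 0 := by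
    intro i j hi
    rw [hB i j]
    by_cases hj : (j:ℕ) < γ - 1
    · rw [dif_pos hj, htl i j hi hj,
        htr i ⟨(j:ℕ) + (γ-1), by omega⟩ hi (Nat.le_add_left _ _)]
      simp only [Fin.val_mk]
      rw [if_neg (show ¬ ((j:ℕ) = (i:ℕ) + (γ-1)) by omega)]
      by_cases hij : (i:ℕ) = (j:ℕ)
      · rw [if_pos hij, if_pos (show (j:ℕ) + (γ-1) = (i:ℕ) + (γ-1) by omega)]; ring
      · rw [if_neg hij,
          if_neg (show ¬ ((j:ℕ) + (γ-1) = (i:ℕ) + (γ-1)) by omega)]; ring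
    · rw [dif_neg hj, add_zero, htr i j hi (by omega)]
  have hBbot : ∀ i j : Fin (2*γ-1), γ ≤ (i:ℕ) → (j:ℕ) ≤ (i:ℕ) - γ →
      B i j = if (j:ℕ) = (i:ℕ) - γ then a ((i:ℕ)-γ) + z * b ((i:ℕ)-γ) else 0 := by
    intro i j hi hji
    have hi' : (i:ℕ) < 2*γ-1 := i.isLt
    have hj : (j:ℕ) < γ - 1 := by omega
    rw [hB i j, dif_pos hj, hbl i j hi hj hji,
      hbr i ⟨(j:ℕ) + (γ-1), by omega⟩ hi (by simp) (by simp; omega) (by simp; omega)]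
    simp only [Fin.val_mk]
    have : (j:ℕ) + (γ-1) - (γ-1) = (j:ℕ) := by omega
    rw [this]
    by_cases hij : (j:ℕ) = (i:ℕ) - γ
    · rw [if_pos hij, if_pos hij, if_pos hij]
    · rw [if_neg hij, if_neg hij, if_neg hij]; ring
  -- the row rotation
  set τ : Equiv.Perm (Fin (2*γ-1)) := (finRotate (2*γ-1))^γ with hτ
  have hτval : ∀ k : Fin (2*γ-1), ((τ k : Fin (2*γ-1)) : ℕ) = ((k:ℕ) + γ) % (2*γ-1) := by
    intro k; rw [hτ]; exact rot_pow_val _ γ hN k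
  have hτlo : ∀ k : Fin (2*γ-1), (k:ℕ) < γ - 1 → ((τ k : Fin (2*γ-1)) : ℕ) = (k:ℕ) + γ := by
    intro k hk; rw [hτval k]; exact Nat.mod_eq_of_lt (by omega)
  have hτhi : ∀ k : Fin (2*γ-1), γ - 1 ≤ (k:ℕ) → ((τ k : Fin (2*γ-1)) : ℕ) = (k:ℕ) - (γ-1) := by
    intro k hk
    have hk' : (k:ℕ) < 2*γ-1 := k.isLt
    rw [hτval k, Nat.mod_eq_sub_mod (by omega), Nat.mod_eq_of_lt (by omega)]
    omega
  have hsign : Equiv.Perm.sign τ = 1 := by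
    rw [hτ, map_pow, sign_finRotate' _ hN,
      show 2*γ-1-1 = 2*γ-2 from by omega,
      Even.neg_one_pow ⟨γ-1, by omega⟩, one_pow]
  set D := B.submatrix τ id with hD
  have hdetD : D.det = A.det := by
    rw [hD, Matrix.det_permute, hsign, hdetB]
    simp
  -- D is upper triangular
  have hDtri : D.BlockTriangular id := by
    intro k j hjk
    have hjk' : (j:ℕ) < (k:ℕ) := hjk
    simp only [hD, Matrix.submatrix_apply, id_eq]
    by_cases hk : (k:ℕ) < γ - 1
    · rw [hBbot (τ k) j (by rw [hτlo k hk]; omega) (by rw [hτlo k hk]; omega)]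
      rw [if_neg (by rw [hτlo k hk]; omega)]
    · rw [hBtop (τ k) j (by rw [hτhi k (by omega)]; omega)]
      rw [if_neg (by rw [hτhi k (by omega)]; omega)]
  have hDdiag : ∀ k : Fin (2*γ-1), D k k =
      if (k:ℕ) < γ - 1 then a (k:ℕ) + z * b (k:ℕ) else -1 := by
    intro k
    simp only [hD, Matrix.submatrix_apply, id_eq]
    by_cases hk : (k:ℕ) < γ - 1
    · rw [if_pos hk, hBbot (τ k) k (by rw [hτlo k hk]; omega) (by rw [hτlo k hk]; omega),
        if_pos (by rw [hτlo k hk]; omega)]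
      have : ((τ k : Fin (2*γ-1)) : ℕ) - γ = (k:ℕ) := by rw [hτlo k hk]; omega
      rw [this]
    · rw [if_neg hk, hBtop (τ k) k (by rw [hτhi k (by omega)]; omega),
        if_pos (by rw [hτhi k (by omega)]; omega)]
  -- conclude
  rw [← hdetD, Matrix.det_of_upperTriangular hDtri]
  have : ∀ k : Fin (2*γ-1), D k k =
      (fun K => if K < γ - 1 then a K + z * b K else -1) (k:ℕ) := fun k => hDdiag k
  rw [Finset.prod_congr rfl fun k _ => this k,
    Fin.prod_univ_eq_prod_range (fun K => if K < γ - 1 then a K + z * b K else (-1:ℝ)) (2*γ-1)]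
  rw [show 2*γ-1 = (γ-1) + γ from by omega, Finset.prod_range_add]
  have e1 : ∀ K ∈ Finset.range (γ-1),
      (if K < γ - 1 then a K + z * b K else (-1:ℝ)) = a K + z * b K := by
    intro K hK; rw [if_pos (Finset.mem_range.mp hK)]
  have e2 : ∀ K ∈ Finset.range γ,
      (if (γ-1) + K < γ - 1 then a ((γ-1)+K) + z * b ((γ-1)+K) else (-1:ℝ)) = -1 := by
    intro K hK; rw [if_neg (by omega)]
  rw [Finset.prod_congr rfl e1, Finset.prod_congr rfl e2, Finset.prod_const, Finset.card_range]
  ring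
end

section
/- For every integer N ≥ 2, every choice of masses m_1, …, m_N > 0, spring constants k_1, …, k_{N−1} and dashpot constants c_1, …, c_{N−1}, the adjoint polynomial satisfies, as polynomials in z: h_N · adj(z·I_{2N} − F_N) · g_N = (k_1 + z·c_1)(k_2 + z·c_2) ⋯ (k_{N−1} + z·c_{N−1}) / (m_1·m_2 ⋯ m_N). -/
open Polynomial

/-- The `N × N` tridiagonal matrix `X(x_1, …, x_{N−1})` of the spring–dashpot–mass chain
(0-based indexing: `ms i` is the mass `m_{i+1}` and `xs i` is the parameter `x_{i+1}`):
diagonal entries `(x_{i−1} + x_i)/m_i` (with the convention `x_0 = x_N = 0`),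
superdiagonal entries `−x_i/m_i` and subdiagonal entries `−x_i/m_{i+1}`. -/
noncomputable def chainX (N : ℕ) (ms xs : ℕ → ℝ) : Matrix (Fin N) (Fin N) ℝ :=
  Matrix.of fun i j =>
    if i = j then
      ((if (i : ℕ) = 0 then 0 else xs ((i : ℕ) - 1)) +
        (if (i : ℕ) = N - 1 then 0 else xs (i : ℕ))) / ms (i : ℕ)
    else if (j : ℕ) = (i : ℕ) + 1 then -xs (i : ℕ) / ms (i : ℕ)
    else if (i : ℕ) = (j : ℕ) + 1 then -xs (j : ℕ) / ms (i : ℕ)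
    else 0

/-- The `2N × 2N` state matrix `F_N = [[O_N, I_N], [−K_N, −C_N]]` of the chain, where
`K_N = X(k_1, …, k_{N−1})` and `C_N = X(c_1, …, c_{N−1})`. -/
noncomputable def chainF (N : ℕ) (ms ks cs : ℕ → ℝ) :
    Matrix (Fin N ⊕ Fin N) (Fin N ⊕ Fin N) ℝ :=
  Matrix.fromBlocks 0 1 (-(chainX N ms ks)) (-(chainX N ms cs))

/-- The output row vector `h_N` (entry `1` in position `N`, zeros elsewhere), with
polynomial entries. -/
noncomputable def chainH (N : ℕ) : (Fin N ⊕ Fin N) → Polynomial ℝ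
  | Sum.inl i => if (i : ℕ) = N - 1 then 1 else 0
  | Sum.inr _ => 0

/-- The input column vector `g_N` (entry `1/m_1` in position `N+1`, zeros elsewhere), with
polynomial entries. -/
noncomputable def chainG (N : ℕ) (ms : ℕ → ℝ) : (Fin N ⊕ Fin N) → Polynomial ℝ
  | Sum.inl _ => 0
  | Sum.inr i => if (i : ℕ) = 0 then Polynomial.C (1 / ms 0) else 0

/-- The adjoint polynomial `h_N · adj(z·I_{2N} − F_N) · g_N`. -/
noncomputable def adjPoly (N : ℕ) (ms ks cs : ℕ → ℝ) : Polynomial ℝ :=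
  ∑ i, ∑ j, chainH N i * (Matrix.charmatrix (chainF N ms ks cs)).adjugate i j * chainG N ms j

/- ### Auxiliary material for the proof -/

lemma chainX_lower {N : ℕ} (ms xs : ℕ → ℝ) (i j : Fin N) (h : (j:ℕ)+1 < (i:ℕ)) :
    chainX N ms xs i j = 0 := by
  simp only [chainX, Matrix.of_apply]
  rw [if_neg (by simp [Fin.ext_iff]; omega), if_neg (by omega), if_neg (by omega)]

lemma chainX_sub {N : ℕ} (ms xs : ℕ → ℝ) (i j : Fin N) (h : (i:ℕ) = (j:ℕ)+1) :
    chainX N ms xs i j = -xs (j:ℕ) / ms (i:ℕ) := by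
  simp only [chainX, Matrix.of_apply]
  rw [if_neg (by simp [Fin.ext_iff]; omega), if_neg (by omega), if_pos h]

namespace AdjAux

variable (n : ℕ) (ms ks cs : ℕ → ℝ)

/-- `K` with polynomial entries. -/
noncomputable def Kh : Matrix (Fin (n+2)) (Fin (n+2)) ℝ[X] := (chainX (n+2) ms ks).map C

/-- `C` with polynomial entries. -/
noncomputable def Ch : Matrix (Fin (n+2)) (Fin (n+2)) ℝ[X] := (chainX (n+2) ms cs).map C

/-- The bottom-right block of the row-updated characteristic matrix. -/
noncomputable def Rm : Matrix (Fin (n+2)) (Fin (n+2)) ℝ[X] :=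
  Matrix.of fun i j =>
    if (i : ℕ) = 0 then 0
    else ((X : ℝ[X]) • (1 : Matrix (Fin (n+2)) (Fin (n+2)) ℝ[X]) + Ch n ms cs) i j

/-- The bottom-left block of the row-updated characteristic matrix. -/
noncomputable def L0 : Matrix (Fin (n+2)) (Fin (n+2)) ℝ[X] :=
  Matrix.of fun i j =>
    if (i : ℕ) = 0 then (if (j : ℕ) = n + 1 then 1 else 0) else Kh n ms ks i j

/-- The `N × N` matrix whose determinant gives the relevant cofactor. -/
noncomputable def Lm : Matrix (Fin (n+2)) (Fin (n+2)) ℝ[X] :=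
  L0 n ms ks + (X : ℝ[X]) • Rm n ms cs

lemma B_eq :
    (Matrix.charmatrix (chainF (n+2) ms ks cs)).updateRow (Sum.inr 0)
        (Pi.single (Sum.inl (Fin.last (n+1))) 1) =
      Matrix.fromBlocks ((X : ℝ[X]) • 1) (-1) (L0 n ms ks) (Rm n ms cs) := by
  ext i j
  rcases i with a | a <;> rcases j with b | b <;>
    simp [Matrix.updateRow_apply, Matrix.charmatrix_apply, chainF, Matrix.fromBlocks,
      Pi.single_apply, Matrix.diagonal_apply, L0, Rm, Kh, Ch, Matrix.one_apply, Fin.ext_iff,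
      Fin.last, eq_comm (a := (0:ℝ[X])), -Fin.val_eq_zero_iff]

/-- Block-elimination: the `2N × 2N` determinant reduces to `det Lm`. -/
lemma detred (L R : Matrix (Fin (n+2)) (Fin (n+2)) ℝ[X]) :
    (Matrix.fromBlocks ((X : ℝ[X]) • 1) (-1) L R).det = (L + (X : ℝ[X]) • R).det := by
  set Lm := L + (X : ℝ[X]) • R with hLm
  set E1 : Matrix (Fin (n+2) ⊕ Fin (n+2)) (Fin (n+2) ⊕ Fin (n+2)) ℝ[X] :=
    Matrix.fromBlocks 1 0 ((X : ℝ[X]) • 1) 1 with hE1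
  set E2 : Matrix (Fin (n+2) ⊕ Fin (n+2)) (Fin (n+2) ⊕ Fin (n+2)) ℝ[X] :=
    Matrix.fromBlocks 1 0 R 1 with hE2
  set E3 : Matrix (Fin (n+2) ⊕ Fin (n+2)) (Fin (n+2) ⊕ Fin (n+2)) ℝ[X] :=
    Matrix.fromBlocks 1 0 1 1 with hE3
  set E4 : Matrix (Fin (n+2) ⊕ Fin (n+2)) (Fin (n+2) ⊕ Fin (n+2)) ℝ[X] :=
    Matrix.fromBlocks 1 0 Lm 1 with hE4
  have h1 : Matrix.fromBlocks ((X : ℝ[X]) • 1) (-1) L R * E1 =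
      Matrix.fromBlocks (0 : Matrix (Fin (n+2)) (Fin (n+2)) ℝ[X]) (-1) Lm R := by
    rw [hE1, Matrix.fromBlocks_multiply]
    exact Matrix.fromBlocks_inj.mpr ⟨by simp [Matrix.mul_smul, Matrix.smul_mul], by simp,
      by simp [hLm, Matrix.mul_smul, add_comm], by simp⟩
  have h2 : E2 * Matrix.fromBlocks (0 : Matrix (Fin (n+2)) (Fin (n+2)) ℝ[X]) (-1) Lm R =
      Matrix.fromBlocks (0 : Matrix (Fin (n+2)) (Fin (n+2)) ℝ[X]) (-1) Lm 0 := by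
    rw [hE2, Matrix.fromBlocks_multiply]
    exact Matrix.fromBlocks_inj.mpr ⟨by simp, by simp, by simp, by simp⟩
  have h3 : Matrix.fromBlocks (0 : Matrix (Fin (n+2)) (Fin (n+2)) ℝ[X]) (-1) Lm 0 * E3 =
      Matrix.fromBlocks ((-1) : Matrix (Fin (n+2)) (Fin (n+2)) ℝ[X]) (-1) Lm 0 := by
    rw [hE3, Matrix.fromBlocks_multiply]
    exact Matrix.fromBlocks_inj.mpr ⟨by simp, by simp, by simp, by simp⟩
  have h4 : E4 * Matrix.fromBlocks ((-1) : Matrix (Fin (n+2)) (Fin (n+2)) ℝ[X]) (-1) Lm 0 =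
      Matrix.fromBlocks ((-1) : Matrix (Fin (n+2)) (Fin (n+2)) ℝ[X]) (-1) 0 (-Lm) := by
    rw [hE4, Matrix.fromBlocks_multiply]
    exact Matrix.fromBlocks_inj.mpr ⟨by simp, by simp, by simp, by simp⟩
  have e1 : E1.det = 1 := by rw [hE1, Matrix.det_fromBlocks_zero₁₂]; simp
  have e2 : E2.det = 1 := by rw [hE2, Matrix.det_fromBlocks_zero₁₂]; simp
  have e3 : E3.det = 1 := by rw [hE3, Matrix.det_fromBlocks_zero₁₂]; simp
  have e4 : E4.det = 1 := by rw [hE4, Matrix.det_fromBlocks_zero₁₂]; simp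
  have final : (Matrix.fromBlocks ((-1) : Matrix (Fin (n+2)) (Fin (n+2)) ℝ[X]) (-1) 0 (-Lm)).det
      = Lm.det := by
    rw [Matrix.det_fromBlocks_zero₂₁,
      show ((-1 : Matrix (Fin (n+2)) (Fin (n+2)) ℝ[X])) = -(1:Matrix _ _ _) from rfl,
      Matrix.det_neg, Matrix.det_neg]
    simp [← mul_assoc, ← mul_pow]
  calc (Matrix.fromBlocks ((X : ℝ[X]) • 1) (-1) L R).det
      = (E4 * (E2 * (Matrix.fromBlocks ((X:ℝ[X]) • 1) (-1) L R * E1) * E3)).det := by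
        simp [Matrix.det_mul, e1, e2, e3, e4]
    _ = Lm.det := by rw [h1, h2, h3, h4, final]

lemma Lm_succ (i : Fin (n+1)) (j : Fin (n+2)) :
    Lm n ms ks cs i.succ j =
      C (chainX (n+2) ms ks i.succ j) +
        X * ((if i.succ = j then X else 0) + C (chainX (n+2) ms cs i.succ j)) := by
  simp [Lm, L0, Rm, Kh, Ch, Matrix.one_apply, Fin.ext_iff, -Fin.val_eq_zero_iff]

lemma detLm : (Lm n ms ks cs).det =
    (∏ r : Fin (n+1), (C (ks (r:ℕ)) + X * C (cs (r:ℕ)))) *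
      C (∏ r ∈ Finset.range (n+1), (1 / ms (r+1))) := by
  rw [Matrix.det_succ_row_zero]
  rw [Finset.sum_eq_single (Fin.last (n+1))]
  · have hrow : Lm n ms ks cs 0 (Fin.last (n+1)) = 1 := by
      simp [Lm, L0, Rm, Fin.last]
    rw [hrow, Fin.succAbove_last, Fin.val_last, mul_one]
    set Mn := (Lm n ms ks cs).submatrix Fin.succ Fin.castSucc with hMn
    have hdiag : ∀ r : Fin (n+1), Mn r r =
        (C (ks (r:ℕ)) + X * C (cs (r:ℕ))) * C (1 / ms ((r:ℕ)+1)) * (-1) := by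
      intro r
      have h1 : ((r.succ : Fin (n+2)) : ℕ) = ((r.castSucc : Fin (n+2)) : ℕ) + 1 := by simp
      rw [hMn, Matrix.submatrix_apply, Lm_succ, chainX_sub _ _ _ _ h1, chainX_sub _ _ _ _ h1,
        if_neg (by simp [Fin.ext_iff])]
      have e : ∀ a m : ℝ, -a / m = a * (1/m) * (-1) := by intro a m; ring
      rw [e (ks _), e (cs _)]
      simp only [Fin.coe_castSucc, Fin.val_succ]
      simp only [_root_.map_mul, _root_.map_neg, _root_.map_one]
      ring
    have htri : Mn.BlockTriangular id := by
      intro i j hij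
      have hij' : (j:ℕ) < (i:ℕ) := hij
      have h2 : ((j.castSucc : Fin (n+2)) : ℕ) + 1 < ((i.succ : Fin (n+2)) : ℕ) := by
        simp; exact hij'
      rw [hMn, Matrix.submatrix_apply, Lm_succ, chainX_lower _ _ _ _ h2, chainX_lower _ _ _ _ h2,
        if_neg (by simp [Fin.ext_iff]; omega)]
      simp
    rw [Matrix.det_of_upperTriangular htri]
    calc (-1:ℝ[X])^(n+1) * ∏ i : Fin (n+1), Mn i i
        = (-1:ℝ[X])^(n+1) * ((∏ r : Fin (n+1), (C (ks (r:ℕ)) + X * C (cs (r:ℕ)))) *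
            (∏ r : Fin (n+1), (C (1 / ms ((r:ℕ)+1)) : ℝ[X])) * (-1:ℝ[X])^(n+1)) := by
          rw [Finset.prod_congr rfl fun r _ => hdiag r, Finset.prod_mul_distrib,
            Finset.prod_mul_distrib, Finset.prod_const, Finset.card_univ, Fintype.card_fin]
      _ = (∏ r : Fin (n+1), (C (ks (r:ℕ)) + X * C (cs (r:ℕ)))) *
            C (∏ r ∈ Finset.range (n+1), (1 / ms (r+1))) := by
          rw [← map_prod, Fin.prod_univ_eq_prod_range (fun r => (1:ℝ) / ms (r+1))]
          have h1 : (-1:ℝ[X])^(n+1) * (-1:ℝ[X])^(n+1) = 1 := by rw [← mul_pow]; norm_num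
          rw [mul_comm ((-1:ℝ[X])^(n+1)), mul_assoc, h1, mul_one]
  · intro b _ hb
    have : Lm n ms ks cs 0 b = 0 := by
      have : (b : ℕ) ≠ n + 1 := by
        intro h; exact hb (by simp [Fin.ext_iff, h])
      simp [Lm, L0, Rm, this]
    simp [this]
  · simp

end AdjAux

lemma adjPoly_red (n : ℕ) (ms ks cs : ℕ → ℝ) :
    adjPoly (n+2) ms ks cs =
      (Matrix.charmatrix (chainF (n+2) ms ks cs)).adjugate (Sum.inl (Fin.last (n+1)))
          (Sum.inr 0) * C (1 / ms 0) := by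
  have hc : ∀ a : Fin (n+2), ((a:ℕ) = n+2-1) ↔ (a = Fin.last (n+1)) := by
    intro a; simp [Fin.ext_iff]
  have hc0 : ∀ b : Fin (n+2), ((b:ℕ) = 0) ↔ (b = 0) := by
    intro b; simp [Fin.ext_iff, -Fin.val_eq_zero_iff]
  simp only [adjPoly, Fintype.sum_sum_type, chainH, chainG, hc, hc0, mul_zero, zero_mul,
    Finset.sum_const_zero, add_zero, zero_add, ite_mul, one_mul, mul_ite,
    Finset.sum_ite_eq', Finset.mem_univ, if_true]

/-- **Theorem 3.1 (form of the adjoint polynomial).**  For every integer `N ≥ 2`, every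
choice of masses `m_1, …, m_N > 0` and of spring constants `k_1, …, k_{N−1}` and dashpot
constants `c_1, …, c_{N−1}` (0-based: `ms i = m_{i+1}`, `ks i = k_{i+1}`, `cs i = c_{i+1}`),
one has, as polynomials in `z`,
`h_N · adj(z·I_{2N} − F_N) · g_N = (k_1 + z c_1) ⋯ (k_{N−1} + z c_{N−1}) / (m_1 ⋯ m_N)`. -/
theorem adjPoly_eq (N : ℕ) (hN : 2 ≤ N) (ms ks cs : ℕ → ℝ)
    (hm : ∀ i < N, 0 < ms i) :
    adjPoly N ms ks cs =
      (∏ i ∈ Finset.range (N - 1), (Polynomial.C (ks i) + Polynomial.X * Polynomial.C (cs i))) *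
        Polynomial.C (1 / ∏ i ∈ Finset.range N, ms i) := by
  obtain ⟨n, rfl⟩ : ∃ n, N = n + 2 := ⟨N - 2, by omega⟩
  rw [adjPoly_red, Matrix.adjugate_apply, AdjAux.B_eq, AdjAux.detred]
  rw [show AdjAux.L0 n ms ks + (X : ℝ[X]) • AdjAux.Rm n ms cs = AdjAux.Lm n ms ks cs from rfl]
  rw [AdjAux.detLm]
  rw [show n + 2 - 1 = n + 1 from rfl,
    ← Fin.prod_univ_eq_prod_range (fun r => (C (ks r) + X * C (cs r)))]
  rw [mul_assoc, ← map_mul]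
  congr 2
  rw [Finset.prod_range_succ' (fun i => ms i) (n+1)]
  simp [one_div, mul_inv, Finset.prod_inv_distrib, mul_comm]
end

section
/- Fix masses m_1, m_2, … > 0, spring constants k_1, k_2, … and dashpot constants c_1, c_2, …, and set b_i(z) = z·c_i + k_i. Define polynomials inductively by P_1(z) = z², D_0(z) = 1, D_j(z) = P_j(z) + (b_j(z)/m_j)·D_{j−1}(z) for j ≥ 1, and P_j(z) = (z² + b_{j−1}(z)/m_j)·P_{j−1}(z) + z²·(b_{j−1}(z)/m_{j−1})·D_{j−2}(z) for j ≥ 2. Then for every N ≥ 1, P_N(z) equals the characteristic polynomial det(z·I_{2N} − F_N) of the matrix F_N. -/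
open Polynomial

/-- The pair `(P_n, D_n)` of polynomials of Theorem 4.1, defined inductively by
`P_1(z) = z²`, `D_0(z) = 1`, `D_j = P_j + (b_j/m_j)·D_{j−1}` for `j ≥ 1`, and
`P_j = (z² + b_{j−1}/m_j)·P_{j−1} + z²·(b_{j−1}/m_{j−1})·D_{j−2}` for `j ≥ 2`, where
`b_i(z) = z·c_i + k_i` (0-based data: `ms i = m_{i+1}`, `ks i = k_{i+1}`, `cs i = c_{i+1}`,
so `b_{i+1}(z)` is `X·C(cs i) + C(ks i)`; the unused value `P_0` is set to `0`). -/
noncomputable def chainPD (ms ks cs : ℕ → ℝ) : ℕ → Polynomial ℝ × Polynomial ℝ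
  | 0 => (0, 1)
  | 1 =>
    (Polynomial.X ^ 2,
      Polynomial.X ^ 2 +
        Polynomial.C (1 / ms 0) * (Polynomial.X * Polynomial.C (cs 0) + Polynomial.C (ks 0)) * 1)
  | (n + 2) =>
    let b : ℕ → Polynomial ℝ := fun i => Polynomial.X * Polynomial.C (cs i) + Polynomial.C (ks i)
    let P : Polynomial ℝ :=
      (Polynomial.X ^ 2 + Polynomial.C (1 / ms (n + 1)) * b n) * (chainPD ms ks cs (n + 1)).1 +
        Polynomial.X ^ 2 * Polynomial.C (1 / ms n) * b n * (chainPD ms ks cs n).2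
    (P, P + Polynomial.C (1 / ms (n + 1)) * b (n + 1) * (chainPD ms ks cs (n + 1)).2)



section Tri
variable {R : Type*} [CommRing R]

def triE (d u l : ℕ → R) (β : R) (n i j : ℕ) : R :=
  if i = j then (if i = n - 1 then β else d i)
  else if j = i + 1 then u i
  else if i = j + 1 then l j
  else 0

def tri (d u l : ℕ → R) (β : R) (n : ℕ) : Matrix (Fin n) (Fin n) R :=
  Matrix.of fun i j => triE d u l β n (i : ℕ) (j : ℕ)

lemma tri_apply (d u l : ℕ → R) (β : R) (n : ℕ) (i j : Fin n) :
    tri d u l β n i j = triE d u l β n (i : ℕ) (j : ℕ) := rfl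

lemma triE_restrict (d u l : ℕ → R) (β : R) {n m : ℕ} (i j : ℕ) (hi : i < m) (hm : m < n) :
    triE d u l β n i j = triE d u l (d (m - 1)) m i j := by
  unfold triE
  rcases eq_or_ne i j with rfl | h
  · rw [if_pos rfl, if_pos rfl, if_neg (by omega : ¬ i = n - 1)]
    rcases eq_or_ne i (m - 1) with h2 | h2
    · rw [if_pos h2, h2]
    · rw [if_neg h2]
  · rw [if_neg h, if_neg h]

lemma det_tri_step (d u l : ℕ → R) (β : R) (n : ℕ) :
    (tri d u l β (n + 2)).det =
      β * (tri d u l (d n) (n + 1)).det - u n * l n * (tri d u l (d (n - 1)) n).det := by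
  have expand := Matrix.det_succ_row (tri d u l β (n + 2)) (Fin.last (n + 1))
  simp only [Fin.sum_univ_castSucc] at expand
  rw [expand]
  -- the sum over the first `n` columns vanishes
  rw [Finset.sum_eq_zero (fun j _ => by
    have hj : (j : ℕ) < n := j.isLt
    have hentry : tri d u l β (n + 2) (Fin.last (n + 1)) (j.castSucc.castSucc) = 0 := by
      rw [tri_apply, Fin.coe_castSucc, Fin.coe_castSucc, Fin.val_last, triE,
        if_neg (by omega), if_neg (by omega), if_neg (by omega)]
    rw [hentry, mul_zero, zero_mul]), zero_add]
  -- entries of the last row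
  have hβ : tri d u l β (n + 2) (Fin.last (n + 1)) (Fin.last (n + 1)) = β := by
    rw [tri_apply, Fin.val_last, triE, if_pos rfl, if_pos (by omega)]
  have hl : tri d u l β (n + 2) (Fin.last (n + 1)) ((Fin.last n).castSucc) = l n := by
    rw [tri_apply, Fin.val_last, Fin.coe_castSucc, Fin.val_last, triE,
      if_neg (by omega), if_neg (by omega), if_pos rfl]
  -- the minor at the last column
  have hminor1 : (tri d u l β (n + 2)).submatrix (Fin.last (n + 1)).succAbove
      (Fin.last (n + 1)).succAbove = tri d u l (d n) (n + 1) := by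
    ext i j
    rw [Matrix.submatrix_apply, Fin.succAbove_last, tri_apply, tri_apply,
      Fin.coe_castSucc, Fin.coe_castSucc]
    exact triE_restrict d u l β (i : ℕ) (j : ℕ) (by omega : (i:ℕ) < n + 1)
      (by omega : n + 1 < n + 2)
  -- the minor at column `n`
  have hminor2 : ((tri d u l β (n + 2)).submatrix (Fin.last (n + 1)).succAbove
      ((Fin.last n).castSucc.succAbove)).det = u n * (tri d u l (d (n - 1)) n).det := by
    set B := (tri d u l β (n + 2)).submatrix (Fin.last (n + 1)).succAbove
      ((Fin.last n).castSucc.succAbove) with hB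
    have expand2 := Matrix.det_succ_column B (Fin.last n)
    simp only [Fin.sum_univ_castSucc] at expand2
    rw [expand2]
    have hcolzero : ∀ i : Fin n, B i.castSucc (Fin.last n) = 0 := by
      intro i
      have hcol : (Fin.last n).castSucc.succAbove (Fin.last n) = Fin.last (n + 1) := by
        rw [Fin.succAbove_of_le_castSucc _ _ (le_refl _), Fin.succ_last]
      rw [hB, Matrix.submatrix_apply, Fin.succAbove_last, hcol, tri_apply,
        Fin.coe_castSucc, Fin.coe_castSucc, Fin.val_last, triE,
        if_neg (by have := i.isLt; omega), if_neg (by have := i.isLt; omega),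
        if_neg (by have := i.isLt; omega)]
    rw [Finset.sum_eq_zero (fun i _ => by rw [hcolzero i, mul_zero, zero_mul]), zero_add]
    have hentry : B (Fin.last n) (Fin.last n) = u n := by
      have hcol : (Fin.last n).castSucc.succAbove (Fin.last n) = Fin.last (n + 1) := by
        rw [Fin.succAbove_of_le_castSucc _ _ (le_refl _), Fin.succ_last]
      rw [hB, Matrix.submatrix_apply, Fin.succAbove_last, hcol, tri_apply,
        Fin.coe_castSucc, Fin.val_last, Fin.val_last, triE,
        if_neg (by omega), if_pos rfl]
    have hminor3 : B.submatrix (Fin.last n).succAbove (Fin.last n).succAbove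
        = tri d u l (d (n - 1)) n := by
      ext i j
      have hcol2 : (Fin.last n).castSucc.succAbove (j.castSucc) = j.castSucc.castSucc := by
        apply Fin.succAbove_of_castSucc_lt
        rw [Fin.lt_def]
        simpa using j.isLt
      rw [hB, Matrix.submatrix_apply, Matrix.submatrix_apply, Fin.succAbove_last,
        Fin.succAbove_last, hcol2, tri_apply, tri_apply, Fin.coe_castSucc, Fin.coe_castSucc,
        Fin.coe_castSucc, Fin.coe_castSucc]
      exact triE_restrict d u l β (i : ℕ) (j : ℕ) (by have := i.isLt; omega)
        (by omega : n < n + 2)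
    rw [hentry, hminor3]
    simp only [Fin.val_last]
    have heven : Even (n + n) := ⟨n, rfl⟩
    rw [heven.neg_one_pow]
    ring
  rw [hβ, hl, hminor1, hminor2]
  simp only [Fin.val_last, Fin.coe_castSucc]
  have hodd : Odd (n + 1 + n) := ⟨n, by ring⟩
  have heven : Even (n + 1 + (n + 1)) := ⟨n + 1, rfl⟩
  rw [hodd.neg_one_pow, heven.neg_one_pow]
  ring

end Tri
lemma det_fromBlocks_neg_one {m : Type*} [DecidableEq m] [Fintype m] {α : Type*} [CommRing α]
    (A C D : Matrix m m α) :
    (Matrix.fromBlocks A (-1) C D).det = (C + D * A).det := by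
  have h : Matrix.fromBlocks A (-1) C D =
      Matrix.fromBlocks 1 (-1) (C - D + D * A) D * Matrix.fromBlocks 1 0 (1 - A) 1 := by
    have h11 : (1 : Matrix m m α) * 1 + (-1) * (1 - A) = A := by noncomm_ring
    have h12 : (1 : Matrix m m α) * 0 + (-1) * 1 = -1 := by noncomm_ring
    have h21 : (C - D + D * A) * 1 + D * (1 - A) = C := by noncomm_ring
    have h22 : (C - D + D * A) * 0 + D * 1 = D := by noncomm_ring
    rw [Matrix.fromBlocks_multiply, h11, h12, h21, h22]
  rw [h, Matrix.det_mul, Matrix.det_fromBlocks_one₁₁, Matrix.det_fromBlocks_zero₁₂]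
  simp only [Matrix.det_one, mul_one, one_mul]
  congr 1
  noncomm_ring

lemma charpoly_chainF (N : ℕ) (ms ks cs : ℕ → ℝ) :
    Matrix.charpoly (chainF N ms ks cs) =
      ((chainX N ms ks).map C +
        ((Matrix.diagonal fun _ => X) + (chainX N ms cs).map C) *
          Matrix.diagonal (fun _ => (X : ℝ[X]))).det := by
  have c0 : Matrix.charmatrix (0 : Matrix (Fin N) (Fin N) ℝ) =
      Matrix.diagonal fun _ => (X : ℝ[X]) := by
    ext i j
    rw [Matrix.charmatrix_apply]
    simp
  have cone : -(1 : Matrix (Fin N) (Fin N) ℝ).map C = (-1 : Matrix (Fin N) (Fin N) ℝ[X]) := by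
    ext i j
    simp [Matrix.map_apply, Matrix.one_apply, apply_ite (Polynomial.C (R := ℝ))]
  have ckneg : -((-(chainX N ms ks)).map C) = (chainX N ms ks).map C := by
    ext i j
    simp [Matrix.map_apply]
  have ccneg : Matrix.charmatrix (-(chainX N ms cs)) =
      (Matrix.diagonal fun _ => (X : ℝ[X])) + (chainX N ms cs).map C := by
    ext i j
    rw [Matrix.charmatrix_apply]
    simp [Matrix.map_apply, sub_neg_eq_add]
  rw [Matrix.charpoly, chainF, Matrix.charmatrix_fromBlocks, c0, cone, ckneg, ccneg,
    det_fromBlocks_neg_one]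


section Seq
variable (ms ks cs : ℕ → ℝ)

noncomputable def dP (i : ℕ) : ℝ[X] :=
  X ^ 2 + X * C (((if i = 0 then 0 else cs (i - 1)) + cs i) / ms i)
    + C (((if i = 0 then 0 else ks (i - 1)) + ks i) / ms i)

noncomputable def uP (i : ℕ) : ℝ[X] := X * C (-cs i / ms i) + C (-ks i / ms i)

noncomputable def lP (i : ℕ) : ℝ[X] := X * C (-cs i / ms (i + 1)) + C (-ks i / ms (i + 1))

noncomputable def bP (i : ℕ) : ℝ[X] := X * C (cs i) + C (ks i)

noncomputable def βP (N : ℕ) : ℝ[X] :=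
  X ^ 2 + X * C (((if N - 1 = 0 then 0 else cs (N - 1 - 1)) + 0) / ms (N - 1))
    + C (((if N - 1 = 0 then 0 else ks (N - 1 - 1)) + 0) / ms (N - 1))


lemma dP_succ (i : ℕ) :
    dP ms ks cs (i + 1) = X ^ 2 + C (1 / ms (i + 1)) * (bP ks cs i + bP ks cs (i + 1)) := by
  simp only [dP, bP, if_neg (Nat.succ_ne_zero i), Nat.add_sub_cancel, div_eq_mul_inv,
    one_div, map_mul, map_one, map_add]
  ring

lemma uP_eq (i : ℕ) : uP ms ks cs i = -(C (1 / ms i) * bP ks cs i) := by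
  simp only [uP, bP, neg_div, div_eq_mul_inv, one_div, map_neg, map_mul, map_one]
  ring

lemma lP_eq (i : ℕ) : lP ms ks cs i = -(C (1 / ms (i + 1)) * bP ks cs i) := by
  simp only [lP, bP, neg_div, div_eq_mul_inv, one_div, map_neg, map_mul, map_one]
  ring

lemma βP_succ_succ (n : ℕ) :
    βP ms ks cs (n + 2) = X ^ 2 + C (1 / ms (n + 1)) * bP ks cs n := by
  have h1 : n + 2 - 1 = n + 1 := rfl
  have h2 : n + 1 - 1 = n := rfl
  rw [βP, h1, h2, if_neg (Nat.succ_ne_zero n), if_neg (Nat.succ_ne_zero n)]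
  simp only [bP, add_zero, div_eq_mul_inv, one_div, map_mul, map_one]
  ring

lemma βP_one : βP ms ks cs 1 = X ^ 2 := by
  simp [βP]

end Seq

lemma E_eq_tri (N : ℕ) (ms ks cs : ℕ → ℝ) :
    (chainX N ms ks).map C +
      ((Matrix.diagonal fun _ => X) + (chainX N ms cs).map C) *
        Matrix.diagonal (fun _ => (X : ℝ[X])) =
      tri (dP ms ks cs) (uP ms ks cs) (lP ms ks cs) (βP ms ks cs N) N := by
  ext i j
  rw [Matrix.add_apply, Matrix.mul_diagonal, Matrix.add_apply, Matrix.map_apply,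
    Matrix.map_apply, tri_apply]
  by_cases hij : i = j
  · subst hij
    rw [Matrix.diagonal_apply_eq]
    have hX : ∀ xs : ℕ → ℝ, chainX N ms xs i i =
        ((if (i : ℕ) = 0 then 0 else xs ((i : ℕ) - 1)) +
          (if (i : ℕ) = N - 1 then 0 else xs (i : ℕ))) / ms (i : ℕ) := by
      intro xs; simp [chainX]
    rw [hX, hX, triE, if_pos rfl]
    by_cases hN : (i : ℕ) = N - 1
    · rw [if_pos hN, if_pos hN, if_pos hN, βP, ← hN]
      simp only [div_eq_mul_inv, one_div, map_mul, map_add]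
      ring
    · rw [if_neg hN, if_neg hN, if_neg hN, dP]
      simp only [div_eq_mul_inv, map_mul, map_add]
      ring
  · have hij' : (i : ℕ) ≠ (j : ℕ) := fun h => hij (Fin.ext h)
    rw [Matrix.diagonal_apply_ne _ hij]
    have hX : ∀ xs : ℕ → ℝ, chainX N ms xs i j =
        (if (j : ℕ) = (i : ℕ) + 1 then -xs (i : ℕ) / ms (i : ℕ)
          else if (i : ℕ) = (j : ℕ) + 1 then -xs (j : ℕ) / ms (i : ℕ) else 0) := by
      intro xs; simp [chainX, hij]
    rw [hX, hX, triE, if_neg hij']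
    by_cases h2 : (j : ℕ) = (i : ℕ) + 1
    · rw [if_pos h2, if_pos h2, if_pos h2, uP]
      simp only [neg_div, div_eq_mul_inv, map_neg, map_mul]
      ring
    · rw [if_neg h2, if_neg h2, if_neg h2]
      by_cases h3 : (i : ℕ) = (j : ℕ) + 1
      · rw [if_pos h3, if_pos h3, if_pos h3, lP, h3]
        simp only [neg_div, div_eq_mul_inv, map_neg, map_mul]
        ring
      · rw [if_neg h3, if_neg h3, if_neg h3]
        simp

lemma PD_fst (ms ks cs : ℕ → ℝ) (n : ℕ) :
    (chainPD ms ks cs (n + 1)).1 =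
      (chainPD ms ks cs (n + 1)).2 - C (1 / ms n) * bP ks cs n * (chainPD ms ks cs n).2 := by
  cases n with
  | zero => simp only [chainPD, bP]; ring
  | succ m => simp only [chainPD, bP]; ring

lemma PD_snd (ms ks cs : ℕ → ℝ) (n : ℕ) :
    (chainPD ms ks cs (n + 2)).2 =
      (X ^ 2 + C (1 / ms (n + 1)) * (bP ks cs n + bP ks cs (n + 1))) *
          (chainPD ms ks cs (n + 1)).2 -
        (C (1 / ms n) * bP ks cs n) * (C (1 / ms (n + 1)) * bP ks cs n) *
          (chainPD ms ks cs n).2 := by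
  have h := PD_fst ms ks cs n
  simp only [chainPD, bP] at h ⊢
  rw [h]
  ring

lemma D_det (ms ks cs : ℕ → ℝ) (n : ℕ) :
    (tri (dP ms ks cs) (uP ms ks cs) (lP ms ks cs) (dP ms ks cs (n - 1)) n).det =
      (chainPD ms ks cs n).2 := by
  induction n using Nat.twoStepInduction with
  | zero => simp [chainPD]
  | one =>
    rw [Matrix.det_fin_one, tri_apply]
    show triE _ _ _ _ 1 0 0 = _
    rw [triE, if_pos rfl, if_pos rfl]
    show dP ms ks cs 0 = _
    simp only [dP, chainPD, eq_self_iff_true, if_true, ite_true, zero_add, map_zero, map_one,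
      div_eq_mul_inv, one_div, map_mul, map_add]
    ring
  | more n ih1 ih2 =>
    have e2 : n + 2 - 1 = n + 1 := rfl
    have e1 : n + 1 - 1 = n := rfl
    rw [e1] at ih2
    rw [e2, det_tri_step, ih2, ih1, PD_snd, dP_succ, uP_eq, lP_eq]
    ring

theorem chainPD_fst_eq_charpoly_aux (ms ks cs : ℕ → ℝ) (N : ℕ) (hN : 1 ≤ N) :
    (chainPD ms ks cs N).1 = Matrix.charpoly (chainF N ms ks cs) := by
  obtain ⟨n, rfl⟩ : ∃ n, N = n + 1 := ⟨N - 1, by omega⟩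
  rw [charpoly_chainF, E_eq_tri]
  cases n with
  | zero =>
    rw [Matrix.det_fin_one, tri_apply]
    show _ = triE _ _ _ _ 1 0 0
    rw [triE, if_pos rfl, if_pos rfl]
    show _ = βP ms ks cs 1
    rw [βP_one]
    simp [chainPD]
  | succ n =>
    rw [det_tri_step]
    have hD2 := D_det ms ks cs (n + 1)
    rw [show n + 1 - 1 = n from rfl] at hD2
    rw [hD2, D_det ms ks cs n, βP_succ_succ, uP_eq, lP_eq]
    have hfst := PD_fst ms ks cs (n + 1)
    rw [hfst, PD_snd]
    ring


/-- **Theorem 4.1 (inductive form of the characteristic polynomial).**  For all masses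
`m_1, m_2, … > 0`, spring constants `k_1, k_2, …` and dashpot constants `c_1, c_2, …`, the
inductively defined polynomial `P_N` equals the characteristic polynomial
`det(z·I_{2N} − F_N)` of `F_N`, for every `N ≥ 1`. -/
theorem chainPD_fst_eq_charpoly (ms ks cs : ℕ → ℝ) (hm : ∀ i, 0 < ms i)
    (N : ℕ) (hN : 1 ≤ N) :
    (chainPD ms ks cs N).1 = Matrix.charpoly (chainF N ms ks cs) := by
  exact chainPD_fst_eq_charpoly_aux ms ks cs N hN
end

section
/- For N = 2 and any masses m_1, m_2 > 0, spring constant k_1 > 0 and dashpot constant c_1 ≥ 0, the characteristic polynomial P_2(z) = det(z·I_4 − F_2) and the adjoint polynomial Q_2(z) = h_2 · adj(z·I_4 − F_2) · g_2 = (k_1 + z·c_1)/(m_1m_2) have no common complex root. -/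
set_option maxHeartbeats 1000000


open Polynomial

/-- Auxiliary equivalence between `Fin 4` and `Fin 2 ⊕ Fin 2`. -/
def myE4aux : Fin 4 ≃ (Fin 2 ⊕ Fin 2) where
  toFun := ![Sum.inl 0, Sum.inl 1, Sum.inr 0, Sum.inr 1]
  invFun := Sum.elim ![0, 1] ![2, 3]
  left_inv := by decide
  right_inv := by decide

lemma myDetP (w a b c d : ℂ) :
    Matrix.det !![w, 0, -1, 0; 0, w, 0, -1; a, -a, w + b, -b; -c, c, -d, w + d] =
      w ^ 4 + w ^ 2 * ((a + c) + w * (b + d)) := by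
  simp [Matrix.det_succ_row_zero, Fin.sum_univ_succ, Fin.succAbove]
  ring

lemma myDetQ (w c d : ℂ) :
    Matrix.det !![w, 0, -1, 0; 0, w, 0, -1; 0, 1, 0, 0; -c, c, -d, w + d] = c + w * d := by
  simp [Matrix.det_succ_row_zero, Fin.sum_univ_succ, Fin.succAbove]
  ring

/-- **Theorem 5.1.**  For `N = 2`, any masses `m_1, m_2 > 0`, spring constant `k_1 > 0` and
dashpot constant `c_1 ≥ 0` (0-based: `ms 0 = m_1`, `ms 1 = m_2`, `ks 0 = k_1`,
`cs 0 = c_1`), the characteristic polynomial `P_2(z) = det(z·I_4 − F_2)` and the adjoint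
polynomial `Q_2(z) = h_2 · adj(z·I_4 − F_2) · g_2` have no common complex root. -/
theorem no_common_root_two (ms ks cs : ℕ → ℝ)
    (hm1 : 0 < ms 0) (hm2 : 0 < ms 1) (hk : 0 < ks 0) (hc : 0 ≤ cs 0) :
    ¬ ∃ w : ℂ,
        Polynomial.aeval w (Matrix.charpoly (chainF 2 ms ks cs)) = 0 ∧
        Polynomial.aeval w (adjPoly 2 ms ks cs) = 0 := by
  rintro ⟨w, hP, hQ⟩
  have hm1' : (ms 0 : ℂ) ≠ 0 := Complex.ofReal_ne_zero.mpr hm1.ne'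
  have hm2' : (ms 1 : ℂ) ≠ 0 := Complex.ofReal_ne_zero.mpr hm2.ne'
  set α : ℂ := (ks 0 : ℂ) / (ms 0 : ℂ) with hα
  set β : ℂ := (cs 0 : ℂ) / (ms 0 : ℂ) with hβ
  set γ : ℂ := (ks 0 : ℂ) / (ms 1 : ℂ) with hγ
  set δ : ℂ := (cs 0 : ℂ) / (ms 1 : ℂ) with hδ
  set M : Matrix (Fin 2 ⊕ Fin 2) (Fin 2 ⊕ Fin 2) ℂ :=
    (chainF 2 ms ks cs).charmatrix.map (Polynomial.aeval w) with hMdef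
  -- the mapped charmatrix as an explicit 4×4 matrix
  have hA : M.submatrix myE4aux myE4aux =
      !![w, 0, -1, 0; 0, w, 0, -1; α, -α, w + β, -β; -γ, γ, -δ, w + δ] := by
    ext i j
    fin_cases i <;> fin_cases j <;>
      (simp [hMdef, myE4aux, chainF, chainX, Matrix.charmatrix_apply, Matrix.one_apply,
        hα, hβ, hγ, hδ] <;> push_cast <;> ring)
  -- the characteristic polynomial evaluated at w
  have hPval : w ^ 4 + w ^ 2 * ((α + γ) + w * (β + δ)) = 0 := by
    rw [← myDetP w α β γ δ, ← hA, Matrix.det_submatrix_equiv_self]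
    rw [Matrix.charpoly, AlgHom.map_det] at hP
    exact hP
  -- the adjoint polynomial evaluated at w
  have hQ1 : Polynomial.aeval w
      ((Matrix.charmatrix (chainF 2 ms ks cs)).adjugate (Sum.inl 1) (Sum.inr 0))
        * ((ms 0 : ℂ))⁻¹ = 0 := by
    rw [adjPoly, Fintype.sum_sum_type] at hQ
    simp [Fin.sum_univ_two, chainH, chainG, Fintype.sum_sum_type, map_mul, aeval_C] at hQ
    simpa [one_div] using hQ
  have hadj : Polynomial.aeval w
      ((Matrix.charmatrix (chainF 2 ms ks cs)).adjugate (Sum.inl 1) (Sum.inr 0)) =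
      (M.adjugate) (Sum.inl 1) (Sum.inr 0) := by
    have h := RingHom.map_adjugate ((Polynomial.aeval w).toRingHom :
      Polynomial ℝ →+* ℂ) (Matrix.charmatrix (chainF 2 ms ks cs))
    have h2 := congrFun (congrFun h (Sum.inl 1)) (Sum.inr 0)
    simpa [hMdef, Matrix.map_apply, RingHom.mapMatrix_apply] using h2
  -- compute the adjugate entry as an explicit determinant
  have hB : (M.updateRow (Sum.inr 0) (Pi.single (Sum.inl 1) 1)).submatrix myE4aux myE4aux =
      !![w, 0, -1, 0; 0, w, 0, -1; 0, 1, 0, 0; -γ, γ, -δ, w + δ] := by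
    ext i j
    fin_cases i <;> fin_cases j <;>
      (simp [hMdef, myE4aux, chainF, chainX, Matrix.charmatrix_apply, Matrix.one_apply,
        Matrix.updateRow_apply, Pi.single_apply, hγ, hδ] <;> push_cast <;> ring)
  have hadjval : (M.adjugate) (Sum.inl 1) (Sum.inr 0) = γ + w * δ := by
    rw [Matrix.adjugate_apply, ← Matrix.det_submatrix_equiv_self myE4aux, hB, myDetQ]
  -- derive k + w c = 0
  have hkc : (ks 0 : ℂ) + w * (cs 0 : ℂ) = 0 := by
    rw [hadj, hadjval] at hQ1
    have h3 : γ + w * δ = 0 := by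
      rcases mul_eq_zero.mp hQ1 with h | h
      · exact h
      · exact absurd (inv_eq_zero.mp h) hm1'
    rw [hγ, hδ] at h3
    field_simp at h3
    linear_combination h3
  -- conclude
  have hsum : (α + γ) + w * (β + δ) = ((ks 0 : ℂ) + w * (cs 0 : ℂ)) * ((ms 0 : ℂ)⁻¹ + (ms 1 : ℂ)⁻¹) := by
    rw [hα, hβ, hγ, hδ]; field_simp
  have hw4 : w ^ 4 = 0 := by
    rw [hsum, hkc, zero_mul, mul_zero, add_zero] at hPval
    exact hPval
  have hw0 : w = 0 := by
    exact pow_eq_zero_iff (by norm_num) |>.mp hw4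
  rw [hw0, zero_mul, add_zero] at hkc
  exact absurd (Complex.ofReal_eq_zero.mp hkc) hk.ne'
end

section
/- Let N ≥ 2, let m_1, …, m_N > 0 be masses, and let the spring constants k_1, …, k_{N−1} > 0 and dashpot constants c_1, …, c_{N−1} > 0 satisfy the proportionality condition c_1/k_1 = c_2/k_2 = ⋯ = c_{N−1}/k_{N−1}. Then for every index j with 1 ≤ j ≤ N−1, the characteristic polynomial P_N(z) = det(z·I_{2N} − F_N) satisfies P_N(−k_j/c_j) = (k_j/c_j)^{2N}; in particular P_N(−k_j/c_j) ≠ 0. -/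
open Polynomial

lemma eval_charpoly' {n : Type*} [Fintype n] [DecidableEq n] (z : ℝ) (M : Matrix n n ℝ) :
    Polynomial.eval z M.charpoly = (z • (1 : Matrix n n ℝ) - M).det := by
  rw [Matrix.charpoly, ← Polynomial.coe_evalRingHom, RingHom.map_det]
  congr 1
  ext i j
  by_cases hij : i = j <;>
    simp [Matrix.charmatrix_apply, hij, Matrix.one_apply, Matrix.map_apply]


lemma chainX_prop (N : ℕ) (ms ks cs : ℕ → ℝ) (α : ℝ)
    (h : ∀ i < N - 1, cs i = α * ks i) :
    chainX N ms cs = α • chainX N ms ks := by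
  ext i j
  have hi := i.isLt
  have hj := j.isLt
  simp only [chainX, Matrix.of_apply, Matrix.smul_apply, smul_eq_mul]
  by_cases hij : i = j
  · rw [if_pos hij, if_pos hij]
    by_cases h0 : (i:ℕ) = 0
    · by_cases hN : (i:ℕ) = N - 1
      · have h2 : (0:ℕ) = N - 1 := by omega
        simp [h0, if_pos h2]
      · rw [if_pos h0, if_pos h0, if_neg hN, if_neg hN, h _ (by omega)]; ring
    · have h1 : cs ((i:ℕ)-1) = α * ks ((i:ℕ)-1) := h _ (by omega)
      by_cases hN : (i:ℕ) = N - 1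
      · rw [if_neg h0, if_neg h0, if_pos hN, if_pos hN, h1]; ring
      · rw [if_neg h0, if_neg h0, if_neg hN, if_neg hN, h1, h _ (by omega)]; ring
  · rw [if_neg hij, if_neg hij]
    by_cases hsup : (j:ℕ) = (i:ℕ) + 1
    · rw [if_pos hsup, if_pos hsup, h _ (by omega)]; ring
    · rw [if_neg hsup, if_neg hsup]
      by_cases hsub : (i:ℕ) = (j:ℕ) + 1
      · rw [if_pos hsub, if_pos hsub, h _ (by omega)]; ring
      · rw [if_neg hsub, if_neg hsub]; ring


/-- **Theorem 5.2, key computation.**  Let `N ≥ 2`, let `m_1, …, m_N > 0` be masses and let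
the spring constants `k_1, …, k_{N−1} > 0` and dashpot constants `c_1, …, c_{N−1} > 0`
satisfy `c_1/k_1 = ⋯ = c_{N−1}/k_{N−1}` (0-based: `ms i = m_{i+1}`, `ks i = k_{i+1}`,
`cs i = c_{i+1}`).  Then for every `j` with `1 ≤ j ≤ N−1` (0-based `j < N−1`) the
characteristic polynomial `P_N(z) = det(z·I_{2N} − F_N)` satisfies
`P_N(−k_j/c_j) = (k_j/c_j)^{2N}`; in particular `P_N(−k_j/c_j) ≠ 0`. -/
theorem charpoly_eval_neg_ratio (N : ℕ) (hN : 2 ≤ N) (ms ks cs : ℕ → ℝ)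
    (hm : ∀ i < N, 0 < ms i) (hk : ∀ i < N - 1, 0 < ks i) (hc : ∀ i < N - 1, 0 < cs i)
    (hprop : ∀ i < N - 1, ∀ j < N - 1, cs i / ks i = cs j / ks j) :
    ∀ j < N - 1,
      Polynomial.eval (-(ks j / cs j)) (Matrix.charpoly (chainF N ms ks cs)) =
          (ks j / cs j) ^ (2 * N) ∧
        Polynomial.eval (-(ks j / cs j)) (Matrix.charpoly (chainF N ms ks cs)) ≠ 0 := by
  intro j hj
  have hkj := hk j hj
  have hcj := hc j hj
  set r : ℝ := ks j / cs j with hr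
  have hrpos : 0 < r := div_pos hkj hcj
  set α : ℝ := cs j / ks j with hα
  have hαr : α = r⁻¹ := by rw [hr, inv_div]
  have hC : chainX N ms cs = α • chainX N ms ks :=
    chainX_prop _ _ _ _ α fun i hi =>
      (div_eq_iff (hk i hi).ne').mp (hprop i hi j hj)
  set K := chainX N ms ks with hK
  have key : Polynomial.eval (-r) (Matrix.charpoly (chainF N ms ks cs)) = r ^ (2 * N) := by
    rw [eval_charpoly']
    have hblock : (-r) • (1 : Matrix (Fin N ⊕ Fin N) (Fin N ⊕ Fin N) ℝ) - chainF N ms ks cs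
        = Matrix.fromBlocks ((-r) • 1) (-1) K ((-r) • 1 + α • K) := by
      rw [chainF, hC, ← hK]
      ext (i | i) (j | j) <;>
        simp [Matrix.one_apply, Matrix.sub_apply, Matrix.smul_apply, Matrix.add_apply] <;>
        split_ifs <;> ring
    rw [hblock]
    letI : Invertible ((-r) • (1 : Matrix (Fin N) (Fin N) ℝ)) :=
      ⟨(-r)⁻¹ • 1, by
        rw [Matrix.smul_mul, Matrix.mul_smul, smul_smul, Matrix.one_mul,
          inv_mul_cancel₀ (by simpa using hrpos.ne'), one_smul], by
        rw [Matrix.smul_mul, Matrix.mul_smul, smul_smul, Matrix.one_mul,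
          mul_inv_cancel₀ (by simpa using hrpos.ne'), one_smul]⟩
    rw [Matrix.det_fromBlocks₁₁]
    have hinv : (⅟((-r) • (1 : Matrix (Fin N) (Fin N) ℝ))) = (-r)⁻¹ • 1 := rfl
    have hinner : ((-r) • (1 : Matrix (Fin N) (Fin N) ℝ) + α • K)
        - K * ((-r)⁻¹ • 1) * (-1) = (-r) • 1 := by
      have h1 : K * ((-r)⁻¹ • (1 : Matrix (Fin N) (Fin N) ℝ)) * (-1) = r⁻¹ • K := by
        rw [Matrix.mul_smul, Matrix.mul_one, inv_neg, neg_smul, Matrix.neg_mul,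
          Matrix.mul_neg, Matrix.mul_one, neg_neg]
      rw [h1, ← hαr, add_sub_cancel_right]
    rw [hinv, hinner, Matrix.det_smul, Matrix.det_one]
    simp only [Fintype.card_fin, smul_eq_mul, mul_one]
    rw [← mul_pow, neg_mul_neg, ← sq, ← pow_mul]
  refine ⟨key, ?_⟩
  rw [key]
  positivity
end

section
/- Let N ≥ 2, let m_1, …, m_N > 0 be masses, and let the spring constants k_1, …, k_{N−1} > 0 and dashpot constants c_1, …, c_{N−1} > 0 satisfy the proportionality condition c_1/k_1 = c_2/k_2 = ⋯ = c_{N−1}/k_{N−1}. Then the characteristic polynomial P_N(z) = det(z·I_{2N} − F_N) and the adjoint polynomial Q_N(z) = h_N · adj(z·I_{2N} − F_N) · g_N have no common complex root. -/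
open Polynomial

lemma chain_kernel_zero (N : ℕ) (hN : 2 ≤ N) (ms ks : ℕ → ℝ)
    (hm : ∀ i < N, 0 < ms i) (hk : ∀ i < N - 1, 0 < ks i)
    (w b : ℂ) (hb : b ≠ 0) (u : Fin N → ℂ)
    (hrow : ∀ j : Fin N, (j : ℕ) ≠ 0 →
      b * (∑ i, ((chainX N ms ks j i : ℝ) : ℂ) * u i) + w ^ 2 * u j = 0)
    (htop : ∀ i : Fin N, (i : ℕ) = N - 1 → u i = 0) :
    ∀ j, u j = 0 := by
  have key : ∀ t : ℕ, ∀ j : Fin N, N - 1 ≤ (j : ℕ) + t → u j = 0 := by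
    intro t
    induction t with
    | zero =>
      intro j hj
      exact htop j (by have := j.isLt; omega)
    | succ t ih =>
      intro j hj
      by_cases hj2 : N - 1 ≤ (j : ℕ) + t
      · exact ih j hj2
      have hjlt : (j : ℕ) + 1 < N := by omega
      have hjN : (j : ℕ) < N - 1 := by omega
      set j' : Fin N := ⟨(j : ℕ) + 1, hjlt⟩ with hj'def
      have hval : (j' : ℕ) = (j : ℕ) + 1 := rfl
      have hj'0 : (j' : ℕ) ≠ 0 := by omega
      have huj' : u j' = 0 := ih j' (by omega)
      have hsum : (∑ i, ((chainX N ms ks j' i : ℝ) : ℂ) * u i)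
          = ((chainX N ms ks j' j : ℝ) : ℂ) * u j := by
        apply Finset.sum_eq_single j
        · intro i _ hij
          by_cases hge : (j : ℕ) + 1 ≤ (i : ℕ)
          · rw [ih i (by omega), mul_zero]
          · have hilt : (i : ℕ) < (j : ℕ) := by
              have : (i : ℕ) ≠ (j : ℕ) := fun h => hij (Fin.ext h)
              omega
            have hz : chainX N ms ks j' i = 0 := by
              simp only [chainX, Matrix.of_apply, Fin.val_mk]
              rw [if_neg (Fin.ne_of_val_ne (show (j : ℕ) + 1 ≠ (i : ℕ) by omega)),
                if_neg (show ¬((i : ℕ) = (j : ℕ) + 1 + 1) by omega),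
                if_neg (show ¬((j : ℕ) + 1 = (i : ℕ) + 1) by omega)]
            rw [hz]
            simp
        · intro h; exact absurd (Finset.mem_univ j) h
      have hentry : chainX N ms ks j' j = -ks (j : ℕ) / ms ((j : ℕ) + 1) := by
        simp only [chainX, Matrix.of_apply, Fin.val_mk]
        rw [if_neg (Fin.ne_of_val_ne (show (j : ℕ) + 1 ≠ (j : ℕ) by omega)),
          if_neg (show ¬((j : ℕ) = (j : ℕ) + 1 + 1) by omega)]
        simp [hval]
      have h0 := hrow j' hj'0
      rw [hsum, huj', hentry] at h0
      have hks : ks (j : ℕ) ≠ 0 := (hk _ hjN).ne'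
      have hms : ms ((j : ℕ) + 1) ≠ 0 := (hm _ (by omega)).ne'
      have hcoef : ((-ks (j : ℕ) / ms ((j : ℕ) + 1) : ℝ) : ℂ) ≠ 0 := by
        simp only [ne_eq, Complex.ofReal_eq_zero, _root_.div_eq_zero_iff, neg_eq_zero, not_or]
        exact ⟨hks, hms⟩
      have h1 : b * (((-ks (j : ℕ) / ms ((j : ℕ) + 1) : ℝ) : ℂ) * u j) = 0 := by
        rw [← h0]; ring
      rcases mul_eq_zero.mp h1 with h | h
      · exact absurd h hb
      rcases mul_eq_zero.mp h with h | h
      · exact absurd h hcoef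
      · exact h
  intro j
  exact key N j (by have := j.isLt; omega)

/-- **Theorem 5.2.**  Let `N ≥ 2`, let `m_1, …, m_N > 0` be masses and let the spring
constants `k_1, …, k_{N−1} > 0` and dashpot constants `c_1, …, c_{N−1} > 0` satisfy the
proportionality condition `c_1/k_1 = ⋯ = c_{N−1}/k_{N−1}` (0-based: `ms i = m_{i+1}`,
`ks i = k_{i+1}`, `cs i = c_{i+1}`).  Then the characteristic polynomial
`P_N(z) = det(z·I_{2N} − F_N)` and the adjoint polynomial
`Q_N(z) = h_N · adj(z·I_{2N} − F_N) · g_N` have no common complex root. -/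
theorem no_common_root_of_proportional (N : ℕ) (hN : 2 ≤ N) (ms ks cs : ℕ → ℝ)
    (hm : ∀ i < N, 0 < ms i) (hk : ∀ i < N - 1, 0 < ks i) (hc : ∀ i < N - 1, 0 < cs i)
    (hprop : ∀ i < N - 1, ∀ j < N - 1, cs i / ks i = cs j / ks j) :
    ¬ ∃ w : ℂ,
        Polynomial.aeval w (Matrix.charpoly (chainF N ms ks cs)) = 0 ∧
        Polynomial.aeval w (adjPoly N ms ks cs) = 0 := by
  rintro ⟨w, hP, hQ⟩
  have hN1 : 0 < N - 1 := by omega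
  have hk0 := hk 0 hN1
  have hc0 := hc 0 hN1
  set a : ℝ := cs 0 / ks 0 with ha_def
  have ha : 0 < a := div_pos hc0 hk0
  -- proportionality
  have hcs : ∀ i < N - 1, cs i = a * ks i := by
    intro i hi
    have h := hprop i hi 0 hN1
    rw [div_eq_div_iff (hk i hi).ne' hk0.ne'] at h
    rw [ha_def, div_mul_eq_mul_div, eq_div_iff hk0.ne', mul_comm (cs i) (ks 0)]
    linarith [h]
  -- C = a • K entrywise
  have hCK : ∀ i j : Fin N, chainX N ms cs i j = a * chainX N ms ks i j := by
    intro i j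
    have hiN := i.isLt
    have hjN := j.isLt
    by_cases hij : i = j
    · subst hij
      have hc' : chainX N ms cs i i = ((if (i : ℕ) = 0 then 0 else cs ((i : ℕ) - 1)) +
          (if (i : ℕ) = N - 1 then 0 else cs (i : ℕ))) / ms (i : ℕ) := by
        simp only [chainX, Matrix.of_apply, if_pos rfl]
        exact if_pos trivial
      have hk' : chainX N ms ks i i = ((if (i : ℕ) = 0 then 0 else ks ((i : ℕ) - 1)) +
          (if (i : ℕ) = N - 1 then 0 else ks (i : ℕ))) / ms (i : ℕ) := by
        simp only [chainX, Matrix.of_apply, if_pos rfl]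
        exact if_pos trivial
      rw [hc', hk']
      have hA : (if (i : ℕ) = 0 then (0:ℝ) else cs ((i : ℕ) - 1))
          = a * (if (i : ℕ) = 0 then (0:ℝ) else ks ((i : ℕ) - 1)) := by
        split_ifs with h
        · ring
        · exact hcs _ (by omega)
      have hB : (if (i : ℕ) = N - 1 then (0:ℝ) else cs (i : ℕ))
          = a * (if (i : ℕ) = N - 1 then (0:ℝ) else ks (i : ℕ)) := by
        split_ifs with h
        · ring
        · exact hcs _ (by omega)
      rw [hA, hB]; ring
    · simp only [chainX, Matrix.of_apply, if_neg hij]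
      by_cases h1 : (j : ℕ) = (i : ℕ) + 1
      · rw [if_pos h1, if_pos h1, hcs _ (by omega)]; ring
      · rw [if_neg h1, if_neg h1]
        by_cases h2 : (i : ℕ) = (j : ℕ) + 1
        · rw [if_pos h2, if_pos h2, hcs _ (by omega)]; ring
        · rw [if_neg h2, if_neg h2]; ring
  set Fm := chainF N ms ks cs with hFm
  set φ : Polynomial ℝ →+* ℂ := (Polynomial.aeval w : Polynomial ℝ →ₐ[ℝ] ℂ).toRingHom with hφ
  set A : Matrix (Fin N ⊕ Fin N) (Fin N ⊕ Fin N) ℂ := (Matrix.charmatrix Fm).map φ with hA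
  have hφX : φ X = w := by simp [hφ]
  have hφC : ∀ r : ℝ, φ (Polynomial.C r) = (r : ℂ) := fun r => by
    simp [hφ, Polynomial.aeval_C]
  -- entries of A
  have hch : ∀ p q, A p q = φ (Matrix.charmatrix Fm p q) := fun p q => rfl
  have hA11 : ∀ i j : Fin N, A (Sum.inl i) (Sum.inl j) = if i = j then w else 0 := by
    intro i j
    by_cases h : i = j
    · subst h
      rw [hch, Matrix.charmatrix_apply_eq, map_sub, hφX, hφC, if_pos rfl]
      simp [hFm, chainF]
    · rw [hch, Matrix.charmatrix_apply_ne _ _ _ (by simp [h]), map_neg, hφC, if_neg h]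
      simp [hFm, chainF]
  have hA12 : ∀ i j : Fin N, A (Sum.inl i) (Sum.inr j) = if i = j then -1 else 0 := by
    intro i j
    rw [hch, Matrix.charmatrix_apply_ne _ _ _ (by simp), map_neg, hφC]
    by_cases h : i = j
    · subst h; simp [hFm, chainF, Matrix.one_apply]
    · simp [hFm, chainF, Matrix.one_apply, h]
  have hA21 : ∀ i j : Fin N,
      A (Sum.inr i) (Sum.inl j) = ((chainX N ms ks i j : ℝ) : ℂ) := by
    intro i j
    rw [hch, Matrix.charmatrix_apply_ne _ _ _ (by simp), map_neg, hφC]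
    simp [hFm, chainF]
  have hA22 : ∀ i j : Fin N, A (Sum.inr i) (Sum.inr j)
      = (if i = j then w else 0) + (a : ℂ) * ((chainX N ms ks i j : ℝ) : ℂ) := by
    intro i j
    by_cases h : i = j
    · subst h
      rw [hch, Matrix.charmatrix_apply_eq, map_sub, hφX, hφC, if_pos rfl]
      have : Fm (Sum.inr i) (Sum.inr i) = -(chainX N ms cs i i) := by
        simp [hFm, chainF]
      rw [this, hCK]
      push_cast
      ring
    · rw [hch, Matrix.charmatrix_apply_ne _ _ _ (by simp [h]), map_neg, hφC, if_neg h]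
      have : Fm (Sum.inr i) (Sum.inr j) = -(chainX N ms cs i j) := by
        simp [hFm, chainF]
      rw [this, hCK]
      push_cast
      ring
  -- generic row analysis
  have rows : ∀ (M : Matrix (Fin N ⊕ Fin N) (Fin N ⊕ Fin N) ℂ) (x : (Fin N ⊕ Fin N) → ℂ),
      M.mulVec x = 0 → (∀ i : Fin N, M (Sum.inl i) = A (Sum.inl i)) →
      ((∀ i : Fin N, x (Sum.inr i) = w * x (Sum.inl i)) ∧
        ∀ j : Fin N, M (Sum.inr j) = A (Sum.inr j) →
          (1 + (a : ℂ) * w) * (∑ i, ((chainX N ms ks j i : ℝ) : ℂ) * x (Sum.inl i))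
            + w ^ 2 * x (Sum.inl j) = 0) := by
    intro M x hx0 hM1
    have hx1 : ∀ i : Fin N, x (Sum.inr i) = w * x (Sum.inl i) := by
      intro i
      have h := congrFun hx0 (Sum.inl i)
      rw [Matrix.mulVec, dotProduct, Fintype.sum_sum_type] at h
      simp only [hM1, hA11, hA12, ite_mul, zero_mul, Finset.sum_ite_eq,
        Finset.mem_univ, if_true, neg_one_mul, Pi.zero_apply] at h
      linear_combination -h
    refine ⟨hx1, ?_⟩
    intro j hMj
    have h := congrFun hx0 (Sum.inr j)
    rw [Matrix.mulVec, dotProduct, Fintype.sum_sum_type] at h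
    simp only [hMj, hA21, hA22, Pi.zero_apply] at h
    have e2 : ∀ i : Fin N, ((if j = i then w else 0) + (a : ℂ) * ((chainX N ms ks j i : ℝ) : ℂ)) * x (Sum.inr i)
        = (if j = i then w * (w * x (Sum.inl i)) else 0)
          + ((a : ℂ) * w) * (((chainX N ms ks j i : ℝ) : ℂ) * x (Sum.inl i)) := by
      intro i; rw [hx1 i]; split_ifs <;> ring
    rw [Finset.sum_congr rfl (fun i _ => e2 i), Finset.sum_add_distrib,
      Finset.sum_ite_eq, ← Finset.mul_sum] at h
    simp only [Finset.mem_univ, if_true] at h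
    linear_combination h
  by_cases hbw : 1 + (a : ℂ) * w = 0
  · -- case w = -1/a : use the characteristic polynomial
    have hdet : A.det = 0 := by
      rw [hA, ← RingHom.mapMatrix_apply, ← RingHom.map_det]
      exact hP
    obtain ⟨x, hx, hx0⟩ := Matrix.exists_mulVec_eq_zero_iff.mpr hdet
    obtain ⟨hx1, hreq⟩ := rows A x hx0 (fun _ => rfl)
    have hw : w ≠ 0 := by
      intro h; rw [h, mul_zero, add_zero] at hbw; exact one_ne_zero hbw
    have hu : ∀ j : Fin N, x (Sum.inl j) = 0 := by
      intro j
      have h := hreq j rfl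
      rw [hbw, zero_mul, zero_add] at h
      exact (mul_eq_zero.mp h).resolve_left (pow_ne_zero 2 hw)
    apply hx
    funext p
    cases p with
    | inl i => exact hu i
    | inr i => rw [Pi.zero_apply, hx1 i, hu i, mul_zero]
  · -- case 1 + a w ≠ 0 : use the adjugate polynomial
    have hnl : N - 1 < N := by omega
    have hz0 : 0 < N := by omega
    set nl : Fin N := ⟨N - 1, hnl⟩ with hnl_def
    set z0 : Fin N := ⟨0, hz0⟩ with hz0_def
    have hadj : adjPoly N ms ks cs
        = (Matrix.charmatrix Fm).adjugate (Sum.inl nl) (Sum.inr z0) * Polynomial.C (1 / ms 0) := by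
      rw [adjPoly, Finset.sum_eq_single (Sum.inl nl)]
      · rw [Finset.sum_eq_single (Sum.inr z0)]
        · have h1 : chainH N (Sum.inl nl) = 1 := by simp [chainH, hnl_def]
          have h2 : chainG N ms (Sum.inr z0) = Polynomial.C (1 / ms 0) := by
            simp [chainG, hz0_def]
          rw [h1, h2, one_mul]
        · intro b _ hb
          rcases b with i | i
          · simp [chainG]
          · have : (i : ℕ) ≠ 0 := fun h => hb (congrArg Sum.inr (Fin.ext h))
            simp [chainG, this]
        · intro h; exact absurd (Finset.mem_univ _) h
      · intro b _ hb
        rcases b with i | i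
        · have : (i : ℕ) ≠ N - 1 := fun h => hb (congrArg Sum.inl (Fin.ext h))
          simp [chainH, this]
        · simp [chainH]
      · intro h; exact absurd (Finset.mem_univ _) h
    rw [hadj, map_mul, Polynomial.aeval_C] at hQ
    have hm0 : (algebraMap ℝ ℂ) (1 / ms 0) ≠ 0 := by
      simp only [Complex.coe_algebraMap, ne_eq, Complex.ofReal_eq_zero]
      exact one_div_ne_zero (hm 0 hz0).ne'
    have hadj0 : φ ((Matrix.charmatrix Fm).adjugate (Sum.inl nl) (Sum.inr z0)) = 0 :=
      (mul_eq_zero.mp hQ).resolve_right hm0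
    have hBdet : (A.updateRow (Sum.inr z0) (Pi.single (Sum.inl nl) 1)).det = 0 := by
      rw [← Matrix.adjugate_apply]
      have h1 := RingHom.map_adjugate φ (Matrix.charmatrix Fm)
      have h2 : φ ((Matrix.charmatrix Fm).adjugate (Sum.inl nl) (Sum.inr z0))
          = (φ.mapMatrix (Matrix.charmatrix Fm).adjugate) (Sum.inl nl) (Sum.inr z0) := rfl
      rw [h2, h1] at hadj0
      exact hadj0
    obtain ⟨x, hx, hx0⟩ :=
      Matrix.exists_mulVec_eq_zero_iff.mpr hBdet
    set M : Matrix (Fin N ⊕ Fin N) (Fin N ⊕ Fin N) ℂ :=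
      A.updateRow (Sum.inr z0) (Pi.single (Sum.inl nl) 1) with hM
    have hM1 : ∀ i : Fin N, M (Sum.inl i) = A (Sum.inl i) := fun i =>
      Matrix.updateRow_ne (by simp)
    have hM2 : ∀ j : Fin N, (j : ℕ) ≠ 0 → M (Sum.inr j) = A (Sum.inr j) := fun j hj =>
      Matrix.updateRow_ne (by
        simp only [ne_eq, Sum.inr.injEq]
        intro h
        exact hj (congrArg Fin.val h))
    obtain ⟨hx1, hreq⟩ := rows M x hx0 hM1
    -- the updated row forces x (inl nl) = 0
    have htop : x (Sum.inl nl) = 0 := by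
      have h := congrFun hx0 (Sum.inr z0)
      rw [Matrix.mulVec, dotProduct] at h
      simp only [hM, Matrix.updateRow_self, Pi.single_apply, ite_mul, one_mul, zero_mul,
        Finset.sum_ite_eq', Finset.mem_univ, if_true, Pi.zero_apply] at h
      exact h
    have hu : ∀ j : Fin N, x (Sum.inl j) = 0 := by
      apply chain_kernel_zero N hN ms ks hm hk w (1 + (a : ℂ) * w) hbw
      · intro j hj
        exact hreq j (hM2 j hj)
      · intro i hi
        have : i = nl := Fin.ext hi
        rw [this]; exact htop
    apply hx
    funext p
    cases p with
    | inl i => exact hu i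
    | inr i => rw [Pi.zero_apply, hx1 i, hu i, mul_zero]
end

section
/- There exist masses m_1, m_2, m_3 > 0, spring constants k_1, k_2 > 0 and dashpot constants c_1, c_2 > 0 with c_1/k_1 ≠ c_2/k_2 such that, for N = 3, the characteristic polynomial P_3(z) = det(z·I_6 − F_3) and the adjoint polynomial Q_3(z) = h_3 · adj(z·I_6 − F_3) · g_3 have a common complex root. In other words, the proportionality condition c_1/k_1 = c_2/k_2 cannot simply be dropped: for some non-proportional parameter choices the no-common-root conclusion fails. -/
open Polynomial

noncomputable def ms3 : ℕ → ℝ := fun _ => 1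
noncomputable def ks3 : ℕ → ℝ := fun _ => 1
noncomputable def cs3 : ℕ → ℝ := fun n => if n = 0 then 3/2 else 1

/-- The real matrix `(-1)·I − F₃` for the chosen parameters. -/
noncomputable def myB : Matrix (Fin 3 ⊕ Fin 3) (Fin 3 ⊕ Fin 3) ℝ :=
  Matrix.fromBlocks !![-1,0,0;0,-1,0;0,0,-1] !![-1,0,0;0,-1,0;0,0,-1]
    !![1,-1,0;-1,2,-1;0,-1,1] !![1/2,-3/2,0;-3/2,3/2,-1;0,-1,0]

/-- The common kernel vector. -/
noncomputable def myv : Fin 3 ⊕ Fin 3 → ℝ := Sum.elim ![1,-1,0] ![-1,1,0]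

lemma myv_ne : myv ≠ 0 := by
  intro h
  have := congrFun h (Sum.inl 0)
  simp [myv] at this

lemma myB_mulVec : myB.mulVec myv = 0 := by
  funext i
  obtain (i | i) := i <;> fin_cases i <;>
    simp [myB, myv, Matrix.mulVec, dotProduct, Fintype.sum_sum_type,
      Fin.sum_univ_three] <;> norm_num

lemma myB_det : myB.det = 0 := by
  rw [← Matrix.exists_mulVec_eq_zero_iff]
  exact ⟨myv, myv_ne, myB_mulVec⟩

lemma myB_adj : myB.adjugate (Sum.inl 2) (Sum.inr 0) = 0 := by
  rw [Matrix.adjugate_apply, ← Matrix.exists_mulVec_eq_zero_iff]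
  refine ⟨myv, myv_ne, ?_⟩
  funext i
  obtain (i | i) := i <;> fin_cases i <;>
    simp [myB, myv, Matrix.mulVec, dotProduct, Fintype.sum_sum_type,
      Fin.sum_univ_three, Matrix.updateRow_apply, Pi.single_apply] <;> norm_num

lemma charmatrix_eval :
    (Matrix.charmatrix (chainF 3 ms3 ks3 cs3)).map (Polynomial.eval (-1 : ℝ)) = myB := by
  ext i j
  obtain (i | i) := i <;> obtain (j | j) := j <;> fin_cases i <;> fin_cases j <;>
    simp [Matrix.charmatrix_apply, chainF, chainX, myB, ms3, ks3, cs3,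
      Matrix.one_apply, Matrix.vecHead, Matrix.vecTail] <;> norm_num



lemma eval_charpoly_zero :
    Polynomial.eval (-1 : ℝ) (Matrix.charpoly (chainF 3 ms3 ks3 cs3)) = 0 := by
  have h := RingHom.map_det (Polynomial.evalRingHom (-1 : ℝ))
    (Matrix.charmatrix (chainF 3 ms3 ks3 cs3))
  simp only [RingHom.mapMatrix_apply, Polynomial.coe_evalRingHom] at h
  rw [Matrix.charpoly, h, charmatrix_eval]
  exact myB_det

lemma eval_adj_entry_zero :
    Polynomial.eval (-1 : ℝ)
      ((Matrix.charmatrix (chainF 3 ms3 ks3 cs3)).adjugate (Sum.inl 2) (Sum.inr 0)) = 0 := by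
  have h := congrFun (congrFun (RingHom.map_adjugate (Polynomial.evalRingHom (-1 : ℝ))
    (Matrix.charmatrix (chainF 3 ms3 ks3 cs3))) (Sum.inl 2)) (Sum.inr 0)
  simp only [RingHom.mapMatrix_apply, Matrix.map_apply, Polynomial.coe_evalRingHom] at h
  rw [h, charmatrix_eval]
  exact myB_adj

lemma eval_adjPoly_zero : Polynomial.eval (-1 : ℝ) (adjPoly 3 ms3 ks3 cs3) = 0 := by
  rw [adjPoly]
  simp [Polynomial.eval_finset_sum, chainH, chainG, Fintype.sum_sum_type,
    Fin.sum_univ_three, ms3, eval_adj_entry_zero]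

/-- **Theorem 5.3.**  There exist masses `m_1, m_2, m_3 > 0`, spring constants
`k_1, k_2 > 0` and dashpot constants `c_1, c_2 > 0` with `c_1/k_1 ≠ c_2/k_2` such that, for
`N = 3`, the characteristic polynomial `P_3(z) = det(z·I_6 − F_3)` and the adjoint
polynomial `Q_3(z) = h_3 · adj(z·I_6 − F_3) · g_3` have a common complex root (0-based:
`ms 0 = m_1`, …, `ks 0 = k_1`, `ks 1 = k_2`, `cs 0 = c_1`, `cs 1 = c_2`). -/
theorem exists_nonproportional_common_root :
    ∃ ms ks cs : ℕ → ℝ,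
      0 < ms 0 ∧ 0 < ms 1 ∧ 0 < ms 2 ∧ 0 < ks 0 ∧ 0 < ks 1 ∧ 0 < cs 0 ∧ 0 < cs 1 ∧
      cs 0 / ks 0 ≠ cs 1 / ks 1 ∧
      ∃ w : ℂ,
        Polynomial.aeval w (Matrix.charpoly (chainF 3 ms ks cs)) = 0 ∧
        Polynomial.aeval w (adjPoly 3 ms ks cs) = 0 := by
  refine ⟨ms3, ks3, cs3, by norm_num [ms3], by norm_num [ms3], by norm_num [ms3],
    by norm_num [ks3], by norm_num [ks3], by norm_num [cs3], by norm_num [cs3],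
    by norm_num [ks3, cs3], ⟨-1, ?_, ?_⟩⟩
  · rw [show ((-1 : ℂ)) = algebraMap ℝ ℂ (-1) by simp,
      Polynomial.aeval_algebraMap_apply_eq_algebraMap_eval, eval_charpoly_zero]
    simp
  · rw [show ((-1 : ℂ)) = algebraMap ℝ ℂ (-1) by simp,
      Polynomial.aeval_algebraMap_apply_eq_algebraMap_eval, eval_adjPoly_zero]
    simp
end

section
/- There exist masses m_1, m_2, m_3 > 0, spring constants k_1, k_2 > 0 and dashpot constants c_1, c_2 > 0 with c_1/k_1 ≠ c_2/k_2 such that, for N = 3, the characteristic polynomial P_3(z) = det(z·I_6 − F_3) and the adjoint polynomial Q_3(z) = h_3 · adj(z·I_6 − F_3) · g_3 have no common complex root. In other words, the proportionality condition c_1/k_1 = c_2/k_2 is sufficient but not necessary for the no-common-root conclusion. -/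
open Polynomial

noncomputable def msEx : ℕ → ℝ := fun _ => 1
noncomputable def ksEx : ℕ → ℝ := fun _ => 1
noncomputable def csEx : ℕ → ℝ := fun n => if n = 0 then 1 else 2

set_option maxHeartbeats 1000000 in
theorem stage1 : Matrix.charmatrix (chainF 3 msEx ksEx csEx) =
    Matrix.fromBlocks !![(X:ℝ[X]),0,0; 0,X,0; 0,0,X] !![-1,0,0; 0,-1,0; 0,0,-1]
      !![1,-1,0; -1,2,-1; 0,-1,1] !![X+1,-1,0; -1,X+3,-2; 0,-2,X+2] := by
  apply Matrix.ext
  rintro (i|i) (j|j) <;> fin_cases i <;> fin_cases j <;>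
    norm_num [Matrix.charmatrix_apply, Matrix.diagonal_apply, chainF, chainX,
      Matrix.fromBlocks, Matrix.one_apply, msEx, ksEx, csEx, map_ofNat, Fin.ext_iff,
      Matrix.of_apply, Sum.elim_inl, Sum.elim_inr, -Fin.val_eq_zero_iff] <;> simp

set_option maxHeartbeats 1000000 in
theorem stage2 : (Matrix.fromBlocks !![(X:ℝ[X]),0,0; 0,X,0; 0,0,X] !![-1,0,0; 0,-1,0; 0,0,-1]
      !![1,-1,0; -1,2,-1; 0,-1,1] !![X+1,-1,0; -1,X+3,-2; 0,-2,X+2]).submatrix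
      ((finSumFinEquiv (m := 3) (n := 3)).symm) ((finSumFinEquiv (m := 3) (n := 3)).symm) =
    !![(X:ℝ[X]), 0, 0, -1, 0, 0;
        0, X, 0, 0, -1, 0;
        0, 0, X, 0, 0, -1;
        1, -1, 0, X+1, -1, 0;
        -1, 2, -1, -1, X+3, -2;
        0, -1, 1, 0, -2, X+2] := by
  apply Matrix.ext
  intro i j
  fin_cases i <;> fin_cases j <;> rfl

set_option maxHeartbeats 1000000 in
theorem stage3 : ((Matrix.fromBlocks !![(X:ℝ[X]),0,0; 0,X,0; 0,0,X] !![-1,0,0; 0,-1,0; 0,0,-1]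
      !![1,-1,0; -1,2,-1; 0,-1,1] !![X+1,-1,0; -1,X+3,-2; 0,-2,X+2]).updateRow
      (Sum.inr 0) (Pi.single (Sum.inl 2) 1)).submatrix
      ((finSumFinEquiv (m := 3) (n := 3)).symm) ((finSumFinEquiv (m := 3) (n := 3)).symm) =
    !![(X:ℝ[X]), 0, 0, -1, 0, 0;
        0, X, 0, 0, -1, 0;
        0, 0, X, 0, 0, -1;
        0, 0, 1, 0, 0, 0;
        -1, 2, -1, -1, X+3, -2;
        0, -1, 1, 0, -2, X+2] := by
  apply Matrix.ext
  intro i j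
  fin_cases i <;> fin_cases j <;> rfl

set_option maxRecDepth 100000 in
set_option maxHeartbeats 4000000 in
theorem detP :
    (!![(X:ℝ[X]), 0, 0, -1, 0, 0;
        0, X, 0, 0, -1, 0;
        0, 0, X, 0, 0, -1;
        1, -1, 0, X+1, -1, 0;
        -1, 2, -1, -1, X+3, -2;
        0, -1, 1, 0, -2, X+2]).det
      = X^6 + 6*X^5 + 10*X^4 + 9*X^3 + 3*X^2 := by
  simp [Matrix.det_succ_row_zero, Fin.sum_univ_succ, Fin.succAbove, Fin.lt_def,
    show ((2:Fin 3).castSucc) = 2 from rfl, show ((2:Fin 4).castSucc) = 2 from rfl,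
    show ((2:Fin 5).castSucc) = 2 from rfl, Matrix.cons_val_two, Matrix.vecHead, Matrix.vecTail,
    -Fin.val_fin_lt, -Fin.val_pos_iff, -Fin.val_eq_zero_iff]
  ring

set_option maxRecDepth 100000 in
set_option maxHeartbeats 4000000 in
theorem detQ :
    (!![(X:ℝ[X]), 0, 0, -1, 0, 0;
        0, X, 0, 0, -1, 0;
        0, 0, X, 0, 0, -1;
        0, 0, 1, 0, 0, 0;
        -1, 2, -1, -1, X+3, -2;
        0, -1, 1, 0, -2, X+2]).det
      = 2*X^2 + 3*X + 1 := by
  simp [Matrix.det_succ_row_zero, Fin.sum_univ_succ, Fin.succAbove, Fin.lt_def,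
    show ((2:Fin 3).castSucc) = 2 from rfl, show ((2:Fin 4).castSucc) = 2 from rfl,
    show ((2:Fin 5).castSucc) = 2 from rfl, Matrix.cons_val_two, Matrix.vecHead, Matrix.vecTail,
    -Fin.val_fin_lt, -Fin.val_pos_iff, -Fin.val_eq_zero_iff]
  ring

theorem charpolyEx : Matrix.charpoly (chainF 3 msEx ksEx csEx)
    = X^6 + 6*X^5 + 10*X^4 + 9*X^3 + 3*X^2 := by
  rw [Matrix.charpoly,
    ← Matrix.det_submatrix_equiv_self ((finSumFinEquiv (m := 3) (n := 3)).symm),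
    stage1, stage2, detP]

theorem adjEx : (Matrix.charmatrix (chainF 3 msEx ksEx csEx)).adjugate
    (Sum.inl 2) (Sum.inr 0) = 2*X^2 + 3*X + 1 := by
  rw [Matrix.adjugate_apply, stage1,
    ← Matrix.det_submatrix_equiv_self ((finSumFinEquiv (m := 3) (n := 3)).symm),
    stage3, detQ]

theorem adjPolyEx : adjPoly 3 msEx ksEx csEx = 2*X^2 + 3*X + 1 := by
  rw [adjPoly]
  rw [Fintype.sum_sum_type]
  simp only [Fin.sum_univ_three, Fintype.sum_sum_type, chainH, chainG, msEx]
  norm_num [adjEx]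

/-- **Theorem 5.4.**  There exist masses `m_1, m_2, m_3 > 0`, spring constants
`k_1, k_2 > 0` and dashpot constants `c_1, c_2 > 0` with `c_1/k_1 ≠ c_2/k_2` such that, for
`N = 3`, the characteristic polynomial `P_3(z) = det(z·I_6 − F_3)` and the adjoint
polynomial `Q_3(z) = h_3 · adj(z·I_6 − F_3) · g_3` have no common complex root (0-based:
`ms 0 = m_1`, …, `ks 0 = k_1`, `ks 1 = k_2`, `cs 0 = c_1`, `cs 1 = c_2`): the
proportionality condition is sufficient but not necessary. -/
theorem exists_nonproportional_no_common_root :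
    ∃ ms ks cs : ℕ → ℝ,
      0 < ms 0 ∧ 0 < ms 1 ∧ 0 < ms 2 ∧ 0 < ks 0 ∧ 0 < ks 1 ∧ 0 < cs 0 ∧ 0 < cs 1 ∧
      cs 0 / ks 0 ≠ cs 1 / ks 1 ∧
      ¬ ∃ w : ℂ,
          Polynomial.aeval w (Matrix.charpoly (chainF 3 ms ks cs)) = 0 ∧
          Polynomial.aeval w (adjPoly 3 ms ks cs) = 0 := by

  refine ⟨msEx, ksEx, csEx, by norm_num [msEx], by norm_num [msEx], by norm_num [msEx],
    by norm_num [ksEx], by norm_num [ksEx], by norm_num [csEx], by norm_num [csEx],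
    by norm_num [csEx, ksEx], ?_⟩
  rintro ⟨w, hP, hQ⟩
  rw [charpolyEx] at hP
  rw [adjPolyEx] at hQ
  simp only [map_add, map_mul, map_pow, map_ofNat, aeval_X, map_one] at hP hQ
  have h5 : (5 : ℂ) = 0 := by
    linear_combination (138*w + 133) * hP +
      (-69*w^5 - 377*w^4 - 489*w^3 - 364*w^2 - 15*w + 5) * hQ
  norm_num at h5
end
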